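/- arXiv:1906.08966 — 3 statements merged into one kernel-verified Lean document; each statement's English description precedes it below -/
import Mathlib

section
/- Let A > 0, δ₀ ∈ (0,1), and let p = (p_n)_{n∈ℤ} satisfy |p_n| ≤ δ₀ for all n. Then the series Σ_{j=n+1}^{∞} 2^{−j} ln θ_{j−1}(p) converges absolutely for every n ∈ ℤ, the sequence μ̄_n(A,p) := e^{−A2^{n}} exp(−2^{n} Σ_{j=n+1}^{∞} 2^{−j} ln θ_{j−1}(p)) satisfies μ̄_{n+1}(A,p) = θ_n(p) μ̄_n(A,p)² for all n ∈ ℤ, and the sequence m̄_n(A,p) := 2 μ̄_n(A,p)/ζ_n(p) satisfies m̄_{n+1}(A,p)/m̄_n(A,p) = 2 μ̄_n(A,p) and m̄_{n+1}(A,p) = ζ_n(p) m̄_n(A,p)² for all n ∈ ℤ. -/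
open Real MeasureTheory Filter Topology Asymptotics

noncomputable section

/-- The assumptions on the coagulation rate function `k` and the fragmentation
rate function `γ`, together with all the fixed structural constants. -/
structure Kernels where
  (α αb k₀ k₁ k₂ β βt βb γ₀ γ₁ γ₂ : ℝ)
  (k γ : ℝ → ℝ)
  hα : 0 < α ∧ α < 1
  hαb : 1 < αb
  hk₀ : 0 < k₀
  hk₁ : 0 < k₁
  hk₂ : 0 < k₂
  hβ : 1 < β ∧ β < 2
  hβt : βt < β
  hβb : 1 < βb
  hγ₀ : 0 < γ₀
  hγ₁ : 0 < γ₁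
  hγ₂ : 0 < γ₂
  hkC2 : ContDiffOn ℝ 2 k (Set.Ioi 0)
  hkpos : ∀ ξ : ℝ, 0 < ξ → 0 < k ξ
  hkInfty : Tendsto (fun ξ : ℝ => k ξ / ξ ^ (α + 1)) atTop (𝓝 1)
  hkZero : (fun ξ : ℝ => k ξ - k₀) =O[𝓝[>] (0:ℝ)] fun ξ : ℝ => ξ ^ αb
  hk'ge : ∀ ξ : ℝ, 1 ≤ ξ → |deriv k ξ| ≤ k₁ * ξ ^ α
  hk'le : ∀ ξ : ℝ, 0 < ξ → ξ ≤ 1 → |deriv k ξ| ≤ k₁ * ξ ^ (αb - 1)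
  hk''ge : ∀ ξ : ℝ, 1 ≤ ξ → |deriv (deriv k) ξ| ≤ k₂ * ξ ^ (α - 1)
  hk''le : ∀ ξ : ℝ, 0 < ξ → ξ ≤ 1 → |deriv (deriv k) ξ| ≤ k₂ * ξ ^ (αb - 2)
  hγC2 : ContDiffOn ℝ 2 γ (Set.Ioi 0)
  hγpos : ∀ ξ : ℝ, 0 < ξ → 0 < γ ξ
  hγInfty : (fun ξ : ℝ => γ ξ - ξ ^ β) =O[atTop] fun ξ : ℝ => ξ ^ βt
  hγZero : (fun ξ : ℝ => γ ξ - γ₀) =O[𝓝[>] (0:ℝ)] fun ξ : ℝ => ξ ^ βb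
  hγ'ge : ∀ ξ : ℝ, 1 ≤ ξ → |deriv γ ξ| ≤ γ₁ * ξ ^ (β - 1)
  hγ'le : ∀ ξ : ℝ, 0 < ξ → ξ ≤ 1 → |deriv γ ξ| ≤ γ₁ * ξ ^ (βb - 1)
  hγ''ge : ∀ ξ : ℝ, 1 ≤ ξ → |deriv (deriv γ) ξ| ≤ γ₂ * ξ ^ (β - 2)
  hγ''le : ∀ ξ : ℝ, 0 < ξ → ξ ≤ 1 → |deriv (deriv γ) ξ| ≤ γ₂ * ξ ^ (βb - 2)

/-- `ζ_n(p) = ln 2 · 2^{-(n+p_n)} k(2^{n+p_n}) / γ(2^{n+1+p_{n+1}})`. -/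
def Kernels.zeta (KD : Kernels) (p : ℤ → ℝ) (n : ℤ) : ℝ :=
  Real.log 2 * (2:ℝ) ^ (-((n:ℝ) + p n)) * KD.k ((2:ℝ) ^ ((n:ℝ) + p n)) /
    KD.γ ((2:ℝ) ^ ((n:ℝ) + 1 + p (n + 1)))

/-- `ζ_{n,ρ}` for a constant shift `ρ`. -/
def Kernels.zetaRho (KD : Kernels) (ρ : ℝ) (n : ℤ) : ℝ := KD.zeta (fun _ => ρ) n

/-- `θ_n(p) = 2 ζ_{n+1}(p)/ζ_n(p)`. -/
def Kernels.thetaSeq (KD : Kernels) (p : ℤ → ℝ) (n : ℤ) : ℝ :=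
  2 * KD.zeta p (n + 1) / KD.zeta p n

/-- `μ̄_n(A,p) = e^{-A 2^n} exp(-2^n Σ_{j=n+1}^∞ 2^{-j} ln θ_{j-1}(p))`. -/
def Kernels.mubar (KD : Kernels) (A : ℝ) (p : ℤ → ℝ) (n : ℤ) : ℝ :=
  Real.exp (-A * (2:ℝ) ^ (n:ℝ)) *
    Real.exp (-((2:ℝ) ^ (n:ℝ)) *
      ∑' j : ℕ, (2:ℝ) ^ (-((n:ℝ) + 1 + (j:ℝ))) * Real.log (KD.thetaSeq p (n + (j:ℤ))))

/-- `m̄_n(A,p) = 2 μ̄_n(A,p) / ζ_n(p)`. -/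
def Kernels.mbar (KD : Kernels) (A : ℝ) (p : ℤ → ℝ) (n : ℤ) : ℝ :=
  2 * KD.mubar A p n / KD.zeta p n

/-- The weighted norm `‖y‖_θ = sup_{n≤0} 2^n |y_n| + sup_{n>0} 2^{θ n} |y_n|`,
valued in `ℝ≥0∞` so that membership in `𝒴_θ` is expressed by `Ynorm θ y < ⊤`. -/
def Ynorm (θ : ℝ) (y : ℤ → ℝ) : ENNReal :=
  (⨆ n : {m : ℤ // m ≤ 0}, ENNReal.ofReal ((2:ℝ) ^ ((n.1 : ℝ)) * |y n.1|)) +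
    ⨆ n : {m : ℤ // 0 < m}, ENNReal.ofReal ((2:ℝ) ^ (θ * (n.1 : ℝ)) * |y n.1|)

/-- Discrete derivative `D⁺_n(y) = y_{n+1} - y_n`. -/
def Dplus (y : ℤ → ℝ) (n : ℤ) : ℝ := y (n + 1) - y n

/-- Admissible test functions: continuous, finite limit at `-∞`, and `φ(x) ≤ C 2^x`
for large `x`. -/
def TestFun (φ : ℝ → ℝ) : Prop :=
  Continuous φ ∧ (∃ L : ℝ, Tendsto φ atBot (𝓝 L)) ∧
    ∃ C x₀ : ℝ, ∀ x : ℝ, x₀ ≤ x → φ x ≤ C * (2:ℝ) ^ x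

/-- Right-hand side of the weak formulation of the coagulation–fragmentation
equation in logarithmic variables, for a kernel `Kl` (in logarithmic variables)
and a fragmentation rate `gam`. -/
def weakRHS (Kl : ℝ → ℝ → ℝ) (gam : ℝ → ℝ) (μ : Measure ℝ) (φ : ℝ → ℝ) : ℝ :=
  Real.log 2 / 2 *
      ∫ y, ∫ z, Kl y z * (φ (Real.logb 2 ((2:ℝ) ^ y + (2:ℝ) ^ z)) - φ y - φ z) ∂μ ∂μ -
    1 / 4 * ∫ y, gam ((2:ℝ) ^ y) * (φ y - 2 * φ (y - 1)) ∂μ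

/-- Weak solution of the coagulation–fragmentation equation in logarithmic
variables on the time set `S`, with initial datum `g₀`. -/
def IsWeakSolutionOn (β : ℝ) (Kl : ℝ → ℝ → ℝ) (gam : ℝ → ℝ) (S : Set ℝ)
    (g₀ : Measure ℝ) (g : ℝ → Measure ℝ) : Prop :=
  g 0 = g₀ ∧
  (∀ t ∈ S, ∫⁻ x, ENNReal.ofReal (1 + (2:ℝ) ^ ((β + 1) * x)) ∂(g t) < ⊤) ∧
  (∀ φ : ℝ → ℝ, TestFun φ → ContinuousOn (fun t => ∫ x, φ x ∂(g t)) S) ∧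
  ∀ φ : ℝ → ℝ, TestFun φ → ∀ t ∈ S,
    HasDerivWithinAt (fun s => ∫ x, φ x ∂(g s)) (weakRHS Kl gam (g t) φ) S t

/-- The structural assumptions on the cut-off `Q` and the full coagulation kernel. -/
structure CoagData extends Kernels where
  Q : ℝ → ℝ
  hQC2 : ContDiff ℝ 2 Q
  hQ0 : ∀ x, 0 ≤ Q x
  hQ1 : Q 0 = 1
  hQeven : ∀ x, Q (-x) = Q x
  hQsupp : Function.support Q ⊆ Set.Ioo (-(1/3) : ℝ) (1/3)

/-- The coagulation kernel `K(ξ,η) = (ξ+η)⁻¹ k((ξ+η)/2) Q(2η/(ξ+η) - 1)`. -/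
def CoagData.K (S : CoagData) (ξ η : ℝ) : ℝ :=
  (ξ + η)⁻¹ * S.k ((ξ + η) / 2) * S.Q (2 * η / (ξ + η) - 1)

/-- The coagulation kernel in logarithmic variables, `K(2^y, 2^z)`. -/
def CoagData.Klog (S : CoagData) (y z : ℝ) : ℝ := S.K ((2:ℝ) ^ y) ((2:ℝ) ^ z)

/-- Truncated coagulation kernel in logarithmic variables:
`K_N(2^y,2^z) = K(2^y,2^z) 1_{y < N - 1/2}`. -/
def CoagData.KlogN (S : CoagData) (N : ℕ) (y z : ℝ) : ℝ :=
  if y < (N:ℝ) - 1/2 then S.Klog y z else 0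

/-- Truncated fragmentation rate: `γ_N(ξ) = γ(ξ) 1_{ξ < 2^{N+1/2}}`. -/
def Kernels.gammaTrunc (KD : Kernels) (N : ℕ) (ξ : ℝ) : ℝ :=
  if ξ < (2:ℝ) ^ ((N:ℝ) + 1/2) then KD.γ ξ else 0

/-- `m_n(t)` : the mass of the measure in the interval `I_n = (n-δ₀, n+δ₀)`. -/
def mIn (δ₀ : ℝ) (μ : Measure ℝ) (n : ℤ) : ℝ :=
  (μ (Set.Ioo ((n:ℝ) - δ₀) ((n:ℝ) + δ₀))).toReal

/-- `p_n(t)` : normalized first moment of the measure around the peak `n`. -/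
def pIn (δ₀ : ℝ) (μ : Measure ℝ) (n : ℤ) : ℝ :=
  (mIn δ₀ μ n)⁻¹ * ∫ x in Set.Ioo ((n:ℝ) - δ₀) ((n:ℝ) + δ₀), (x - (n:ℝ)) ∂μ

/-- `q_n(t)` : normalized second moment of the measure around the peak `n`. -/
def qIn (δ₀ : ℝ) (μ : Measure ℝ) (n : ℤ) : ℝ :=
  (mIn δ₀ μ n)⁻¹ *
    ∫ x in Set.Ioo ((n:ℝ) - δ₀) ((n:ℝ) + δ₀), (x - (n:ℝ) - pIn δ₀ μ n) ^ 2 ∂μ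

/-- `m_n⁰ = μ([n-1/2, n+1/2))`. -/
def mhalf (μ : Measure ℝ) (n : ℤ) : ℝ :=
  (μ (Set.Ico ((n:ℝ) - 1/2) ((n:ℝ) + 1/2))).toReal

/-- `p_n⁰ = (m_n⁰)⁻¹ ∫_{[n-1/2,n+1/2)} (x-n) dμ`. -/
def phalf (μ : Measure ℝ) (n : ℤ) : ℝ :=
  (mhalf μ n)⁻¹ * ∫ x in Set.Ico ((n:ℝ) - 1/2) ((n:ℝ) + 1/2), (x - (n:ℝ)) ∂μ

/-- The measure is supported in `∪_{n∈ℤ} (n-δ₀, n+δ₀)`. -/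
def suppInPeaks (δ₀ : ℝ) (μ : Measure ℝ) : Prop :=
  μ ((⋃ n : ℤ, Set.Ioo ((n:ℝ) - δ₀) ((n:ℝ) + δ₀))ᶜ) = 0

/-- Characterization of the stationary peak coefficients `a_n(A,ρ)`:
positive, bounded, solving the recurrence `a_{n+1} = ζ_{n,ρ} a_n²`, with
`a_n = O(2^n)` as `n → -∞` and `a_n = O(2^{(β-α)n} e^{-A 2^n})` as `n → ∞`. -/
def IsStationaryFamily (KD : Kernels) (A ρ : ℝ) (a : ℤ → ℝ) : Prop :=
  (∀ n, 0 < a n) ∧ (∃ B : ℝ, ∀ n, a n ≤ B) ∧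
  (∀ n : ℤ, a (n + 1) = KD.zetaRho ρ n * a n ^ 2) ∧
  ((fun n : ℤ => a n) =O[atBot] fun n : ℤ => (2:ℝ) ^ (n:ℝ)) ∧
  ((fun n : ℤ => a n) =O[atTop]
    fun n : ℤ => (2:ℝ) ^ ((KD.β - KD.α) * (n:ℝ)) * Real.exp (-A * (2:ℝ) ^ (n:ℝ)))

/-- Hypothesis (⋆) on a time-dependent shift sequence `p(t)` with derivative `p'`. -/
def StarHyp (KD : Kernels) (θb₁ η₀ ν : ℝ) (p p' : ℝ → ℤ → ℝ) : Prop :=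
  (∀ t : ℝ, 0 < t → ∀ n : ℤ, |p t n| ≤ η₀) ∧
  (∀ t : ℝ, 0 < t → ∀ n : ℤ, HasDerivAt (fun s => p s n) (p' t n) t) ∧
  (∀ t : ℝ, 0 < t →
    Ynorm θb₁ (Dplus (p t)) ≤
      ENNReal.ofReal (η₀ * t ^ (-(θb₁ / KD.β)) * Real.exp (-(ν * t) / 2))) ∧
  (∀ t : ℝ, 0 < t →
    Ynorm (θb₁ - KD.β) (p' t) ≤
      ENNReal.ofReal (η₀ * (1 + t ^ (-(θb₁ / KD.β))) * Real.exp (-(ν * t) / 2)))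

/-- Coefficient `σ_n(t)` of the time-dependent linearized problem. -/
def Kernels.sigmaLin (KD : Kernels) (AM : ℝ) (p : ℝ → ℤ → ℝ) (n : ℤ) (t : ℝ) : ℝ :=
  8 * KD.mubar AM (p t) n * KD.γ ((2:ℝ) ^ ((n:ℝ) + 1 + p t (n + 1))) /
    KD.γ ((2:ℝ) ^ ((n:ℝ) + p t n))

/-- Solution of the time-dependent linearized problem with datum `y0` at time `t₀`. -/
def IsLinSol (KD : Kernels) (AM : ℝ) (p : ℝ → ℤ → ℝ) (θ t₀ : ℝ)
    (y0 : ℤ → ℝ) (y : ℝ → ℤ → ℝ) : Prop :=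
  y t₀ = y0 ∧ (∀ t ∈ Set.Ici t₀, Ynorm θ (y t) < ⊤) ∧
    ∀ t ∈ Set.Ici t₀, ∀ n : ℤ,
      HasDerivWithinAt (fun s => y s n)
        (KD.γ ((2:ℝ) ^ ((n:ℝ) + p t n)) / 4 *
          (y t (n - 1) - y t n - KD.sigmaLin AM p n t * (y t n - y t (n + 1))))
        (Set.Ici t₀) t

/-- Coefficient `σ^N_n(t)` of the truncated time-dependent linearized problem. -/
def Kernels.sigmaLinT (KD : Kernels) (AM : ℝ) (N : ℤ) (p : ℝ → ℤ → ℝ) (n : ℤ) (t : ℝ) : ℝ :=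
  if n < N then KD.sigmaLin AM p n t else 0

/-- Solution of the truncated time-dependent linearized problem. -/
def IsLinSolTrunc (KD : Kernels) (AM : ℝ) (N : ℤ) (p : ℝ → ℤ → ℝ) (θ t₀ : ℝ)
    (y0 : ℤ → ℝ) (y : ℝ → ℤ → ℝ) : Prop :=
  y t₀ = y0 ∧ (∀ t ∈ Set.Ici t₀, Ynorm θ (y t) < ⊤) ∧
    (∀ t ∈ Set.Ici t₀, ∀ n : ℤ, N < n → y t n = 0) ∧
    ∀ t ∈ Set.Ici t₀, ∀ n : ℤ, n ≤ N →
      HasDerivWithinAt (fun s => y s n)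
        (KD.γ ((2:ℝ) ^ ((n:ℝ) + p t n)) / 4 *
          (y t (n - 1) - y t n - KD.sigmaLinT AM N p n t * (y t n - y t (n + 1))))
        (Set.Ici t₀) t

/-- `‖g₀‖ = sup_{n<0} 2^{-n} g₀([n,n+1)) + g₀([0,∞))`, valued in `ℝ≥0∞`. -/
def gnorm (μ : Measure ℝ) : ENNReal :=
  (⨆ n : {m : ℤ // m < 0},
      ENNReal.ofReal ((2:ℝ) ^ (-(n.1 : ℝ))) * μ (Set.Ico ((n.1 : ℝ)) ((n.1 : ℝ) + 1))) +
    μ (Set.Ici (0:ℝ))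

private lemma bound_aux (f : ℝ → ℝ) (e f₀ : ℝ) (he : 0 ≤ e) (hf₀ : 0 < f₀)
    (hcont : ContinuousOn f (Set.Ioi 0)) (hpos : ∀ ξ : ℝ, 0 < ξ → 0 < f ξ)
    (htop : Tendsto (fun ξ : ℝ => f ξ / ξ ^ e) atTop (𝓝 1))
    (hzero : Tendsto f (𝓝[>] (0:ℝ)) (𝓝 f₀)) :
    ∃ c C : ℝ, 0 < c ∧ 0 < C ∧ ∀ x : ℝ,
      c ≤ f ((2:ℝ) ^ x) ∧ f ((2:ℝ) ^ x) ≤ C * (2:ℝ) ^ (e * |x|) := by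
  -- large region
  have h1 : ∀ᶠ ξ : ℝ in atTop, |f ξ / ξ ^ e - 1| < 1/2 := by
    have := Metric.tendsto_nhds.mp htop (1/2) (by norm_num)
    simpa [Real.dist_eq] using this
  obtain ⟨M₀, hM₀⟩ := eventually_atTop.mp h1
  set M : ℝ := max M₀ 1 with hMdef
  have hM1 : (1:ℝ) ≤ M := le_max_right _ _
  have hMlarge : ∀ ξ : ℝ, M ≤ ξ → |f ξ / ξ ^ e - 1| < 1/2 := fun ξ hξ =>
    hM₀ ξ (le_trans (le_max_left _ _) hξ)
  -- small region
  have h2 : ∀ᶠ ξ : ℝ in 𝓝[>] (0:ℝ), |f ξ - f₀| < f₀/2 := by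
    have := Metric.tendsto_nhds.mp hzero (f₀/2) (by positivity)
    simpa [Real.dist_eq] using this
  obtain ⟨u, hu0, huI⟩ := mem_nhdsGT_iff_exists_Ioc_subset.mp h2
  set ε : ℝ := min u 1 with hεdef
  have hε0 : 0 < ε := lt_min hu0 one_pos
  have hε1 : ε ≤ 1 := min_le_right _ _
  have hsmall : ∀ ξ : ℝ, 0 < ξ → ξ ≤ ε → |f ξ - f₀| < f₀/2 := by
    intro ξ h1' h2'
    exact huI ⟨h1', le_trans h2' (min_le_left _ _)⟩
  -- middle region
  have hsub : Set.Icc ε M ⊆ Set.Ioi (0:ℝ) := fun ξ hξ => lt_of_lt_of_le hε0 hξ.1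
  have hne : (Set.Icc ε M).Nonempty := ⟨ε, le_refl _, le_trans hε1 hM1⟩
  obtain ⟨ξm, hξm, hmin⟩ := (isCompact_Icc).exists_isMinOn hne (hcont.mono hsub)
  obtain ⟨ξM, hξM, hmax⟩ := (isCompact_Icc).exists_isMaxOn hne (hcont.mono hsub)
  refine ⟨min (f₀/2) (min (f ξm) (1/2)), max (3/2) (max (3*f₀/2) (f ξM)), ?_, ?_, ?_⟩
  · exact lt_min (by positivity) (lt_min (hpos _ (hsub hξm)) (by norm_num))
  · exact lt_of_lt_of_le (by norm_num) (le_max_left _ _)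
  · intro x
    set ξ : ℝ := (2:ℝ) ^ x with hξdef
    have hξpos : 0 < ξ := Real.rpow_pos_of_pos two_pos x
    have hone : (1:ℝ) ≤ (2:ℝ) ^ (e * |x|) :=
      Real.one_le_rpow one_le_two (by positivity)
    rcases le_or_gt ξ ε with hc | hc
    · have h := hsmall ξ hξpos hc
      have h' := abs_lt.mp h
      constructor
      · calc min (f₀/2) (min (f ξm) (1/2)) ≤ f₀/2 := min_le_left _ _
          _ ≤ f ξ := by linarith
      · calc f ξ ≤ 3*f₀/2 := by linarith
          _ ≤ max (3/2) (max (3*f₀/2) (f ξM)) := le_trans (le_max_left _ _) (le_max_right _ _)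
          _ ≤ _ * (2:ℝ) ^ (e * |x|) := le_mul_of_one_le_right (by positivity) hone
    rcases le_or_gt M ξ with hc' | hc'
    · have h := abs_lt.mp (hMlarge ξ hc')
      have hξe : (0:ℝ) < ξ ^ e := Real.rpow_pos_of_pos hξpos e
      have hxnn : 0 ≤ x := by
        by_contra hx
        push_neg at hx
        have : ξ < 1 := Real.rpow_lt_one_of_one_lt_of_neg one_lt_two hx
        linarith
      have hxabs : |x| = x := abs_of_nonneg hxnn
      have hξe2 : ξ ^ e = (2:ℝ) ^ (e * |x|) := by
        rw [hξdef, ← Real.rpow_mul (by norm_num : (0:ℝ) ≤ 2), hxabs, mul_comm]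
      have h1e : (1:ℝ) ≤ ξ ^ e := Real.one_le_rpow (le_trans hM1 hc') he
      have hlo : ξ ^ e * (1/2) < f ξ := by
        have := (lt_div_iff₀ hξe).mp (by linarith : (1:ℝ)/2 < f ξ / ξ ^ e)
        linarith
      have hhi : f ξ < ξ ^ e * (3/2) := by
        have := (div_lt_iff₀ hξe).mp (by linarith : f ξ / ξ ^ e < 3/2)
        linarith
      constructor
      · calc min (f₀/2) (min (f ξm) (1/2)) ≤ min (f ξm) (1/2) := min_le_right _ _
          _ ≤ 1/2 := min_le_right _ _
          _ ≤ ξ ^ e * (1/2) := by linarith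
          _ ≤ f ξ := hlo.le
      · calc f ξ ≤ (3/2) * ξ ^ e := by linarith
          _ ≤ max (3/2) (max (3*f₀/2) (f ξM)) * (2:ℝ) ^ (e * |x|) := by
            rw [← hξe2]
            exact mul_le_mul_of_nonneg_right (le_max_left _ _) (le_of_lt hξe)
    · have hmem : ξ ∈ Set.Icc ε M := ⟨le_of_lt hc, le_of_lt hc'⟩
      constructor
      · calc min (f₀/2) (min (f ξm) (1/2)) ≤ min (f ξm) (1/2) := min_le_right _ _
          _ ≤ f ξm := min_le_left _ _
          _ ≤ f ξ := hmin hmem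
      · calc f ξ ≤ f ξM := hmax hmem
          _ ≤ _ := le_trans (le_max_right _ _) (le_max_right _ _)
          _ ≤ _ * (2:ℝ) ^ (e * |x|) := le_mul_of_one_le_right (by positivity) hone

private lemma log_linear_bound (f : ℝ → ℝ) (e f₀ : ℝ) (he : 0 ≤ e) (hf₀ : 0 < f₀)
    (hcont : ContinuousOn f (Set.Ioi 0)) (hpos : ∀ ξ : ℝ, 0 < ξ → 0 < f ξ)
    (htop : Tendsto (fun ξ : ℝ => f ξ / ξ ^ e) atTop (𝓝 1))
    (hzero : Tendsto f (𝓝[>] (0:ℝ)) (𝓝 f₀)) :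
    ∃ a b : ℝ, 0 ≤ a ∧ 0 ≤ b ∧ ∀ x : ℝ, |Real.log (f ((2:ℝ) ^ x))| ≤ a + b * |x| := by
  obtain ⟨c, C, hc, hC, hb⟩ : ∃ c C : ℝ, 0 < c ∧ 0 < C ∧ ∀ x : ℝ,
      c ≤ f ((2:ℝ) ^ x) ∧ f ((2:ℝ) ^ x) ≤ C * (2:ℝ) ^ (e * |x|) :=
    bound_aux f e f₀ he hf₀ hcont hpos htop hzero
  refine ⟨|Real.log c| + |Real.log C|, e * Real.log 2, by positivity,
    by positivity, fun x => ?_⟩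
  have hfpos : 0 < f ((2:ℝ) ^ x) := hpos _ (Real.rpow_pos_of_pos two_pos x)
  have h1 : Real.log c ≤ Real.log (f ((2:ℝ) ^ x)) := Real.log_le_log hc (hb x).1
  have h2 : Real.log (f ((2:ℝ) ^ x)) ≤ Real.log C + e * |x| * Real.log 2 := by
    have := Real.log_le_log hfpos (hb x).2
    rwa [Real.log_mul (ne_of_gt hC) (ne_of_gt (Real.rpow_pos_of_pos two_pos _)),
      Real.log_rpow two_pos] at this
  have h3 : -|Real.log c| ≤ Real.log c := neg_abs_le _
  have h4 : Real.log C ≤ |Real.log C| := le_abs_self _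
  have h5 : 0 ≤ |Real.log c| := abs_nonneg _
  have h6 : 0 ≤ |Real.log C| := abs_nonneg _
  have h7 : 0 ≤ e * Real.log 2 * |x| := by positivity
  rw [abs_le]
  constructor <;> nlinarith [abs_nonneg x]

/-- absolute convergence of the series defining `μ̄_n(A,p)`, and the
recurrence relations for `μ̄_n` and `m̄_n`. -/
theorem mubar_mbar_recurrences (KD : Kernels) (A δ₀ : ℝ) (hA : 0 < A)
    (hδ : 0 < δ₀ ∧ δ₀ < 1) (p : ℤ → ℝ) (hp : ∀ n, |p n| ≤ δ₀) :
    (∀ n : ℤ, Summable (fun j : ℕ =>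
      (2:ℝ) ^ (-((n:ℝ) + 1 + (j:ℝ))) * Real.log (KD.thetaSeq p (n + (j:ℤ))))) ∧
    (∀ n : ℤ, KD.mubar A p (n + 1) = KD.thetaSeq p n * KD.mubar A p n ^ 2) ∧
    (∀ n : ℤ, KD.mbar A p (n + 1) / KD.mbar A p n = 2 * KD.mubar A p n) ∧
    (∀ n : ℤ, KD.mbar A p (n + 1) = KD.zeta p n * KD.mbar A p n ^ 2) := by
  -- tendsto of k at zero
  have hαb0 : (0:ℝ) < KD.αb := lt_trans one_pos KD.hαb
  have hzerok : Tendsto KD.k (𝓝[>] (0:ℝ)) (𝓝 KD.k₀) := by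
    have h0 : Tendsto (fun ξ : ℝ => ξ ^ KD.αb) (𝓝[>] (0:ℝ)) (𝓝 0) := by
      have := (Real.continuousAt_rpow_const 0 KD.αb (Or.inr hαb0.le)).continuousWithinAt
        (s := Set.Ioi (0:ℝ))
      simpa [ContinuousWithinAt, Real.zero_rpow (ne_of_gt hαb0)] using this
    have h1 : Tendsto (fun ξ => KD.k ξ - KD.k₀) (𝓝[>] (0:ℝ)) (𝓝 0) :=
      KD.hkZero.trans_tendsto h0
    have h2 := h1.add_const KD.k₀
    simpa using h2
  have hβb0 : (0:ℝ) < KD.βb := lt_trans one_pos KD.hβb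
  have hzeroγ : Tendsto KD.γ (𝓝[>] (0:ℝ)) (𝓝 KD.γ₀) := by
    have h0 : Tendsto (fun ξ : ℝ => ξ ^ KD.βb) (𝓝[>] (0:ℝ)) (𝓝 0) := by
      have := (Real.continuousAt_rpow_const 0 KD.βb (Or.inr hβb0.le)).continuousWithinAt
        (s := Set.Ioi (0:ℝ))
      simpa [ContinuousWithinAt, Real.zero_rpow (ne_of_gt hβb0)] using this
    have h1 : Tendsto (fun ξ => KD.γ ξ - KD.γ₀) (𝓝[>] (0:ℝ)) (𝓝 0) :=
      KD.hγZero.trans_tendsto h0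
    have h2 := h1.add_const KD.γ₀
    simpa using h2
  -- tendsto of γ at infinity
  have hβpos : (0:ℝ) < KD.β := lt_trans one_pos KD.hβ.1
  have htopγ : Tendsto (fun ξ : ℝ => KD.γ ξ / ξ ^ KD.β) atTop (𝓝 1) := by
    have hA' : Tendsto (fun ξ : ℝ => ξ ^ (KD.βt - KD.β)) atTop (𝓝 0) := by
      have h := tendsto_rpow_neg_atTop (show (0:ℝ) < KD.β - KD.βt by
        linarith [KD.hβt])
      simpa [neg_sub] using h
    have hB : (fun ξ : ℝ => KD.γ ξ / ξ ^ KD.β - 1) =O[atTop]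
        fun ξ : ℝ => ξ ^ (KD.βt - KD.β) := by
      have h2 := KD.hγInfty.mul (isBigO_refl (fun ξ : ℝ => (ξ ^ KD.β)⁻¹) atTop)
      refine h2.congr' ?_ ?_
      · filter_upwards [eventually_gt_atTop (0:ℝ)] with ξ hξ
        have hξβ : (0:ℝ) < ξ ^ KD.β := Real.rpow_pos_of_pos hξ _
        field_simp
      · filter_upwards [eventually_gt_atTop (0:ℝ)] with ξ hξ
        rw [Real.rpow_sub hξ, div_eq_mul_inv]
    have hC := hB.trans_tendsto hA'
    have h3 := hC.add_const 1
    simpa using h3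
  -- log-linear bounds
  obtain ⟨ak, bk, hak, hbk, hkb⟩ := log_linear_bound KD.k (KD.α + 1) KD.k₀
    (by linarith [KD.hα.1]) KD.hk₀ KD.hkC2.continuousOn KD.hkpos KD.hkInfty hzerok
  obtain ⟨ag, bg, hag, hbg, hgb⟩ := log_linear_bound KD.γ KD.β KD.γ₀
    hβpos.le KD.hγ₀ KD.hγC2.continuousOn KD.hγpos htopγ hzeroγ
  have hlog2 : (0:ℝ) < Real.log 2 := Real.log_pos one_lt_two
  -- positivity of ζ and θ
  have hζpos : ∀ n : ℤ, 0 < KD.zeta p n := by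
    intro n
    apply div_pos
    · exact mul_pos (mul_pos hlog2 (Real.rpow_pos_of_pos two_pos _))
        (KD.hkpos _ (Real.rpow_pos_of_pos two_pos _))
    · exact KD.hγpos _ (Real.rpow_pos_of_pos two_pos _)
  have hθpos : ∀ n : ℤ, 0 < KD.thetaSeq p n := fun n => by
    rw [Kernels.thetaSeq]
    exact div_pos (mul_pos two_pos (hζpos (n + 1))) (hζpos n)
  -- log of ζ
  have hlogζ : ∀ n : ℤ, Real.log (KD.zeta p n) =
      Real.log (Real.log 2) - ((n:ℝ) + p n) * Real.log 2 +
        Real.log (KD.k ((2:ℝ) ^ ((n:ℝ) + p n))) -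
        Real.log (KD.γ ((2:ℝ) ^ ((n:ℝ) + 1 + p (n + 1)))) := by
    intro n
    have e1 : (0:ℝ) < (2:ℝ) ^ (-((n:ℝ) + p n)) := Real.rpow_pos_of_pos two_pos _
    have e2 : (0:ℝ) < KD.k ((2:ℝ) ^ ((n:ℝ) + p n)) :=
      KD.hkpos _ (Real.rpow_pos_of_pos two_pos _)
    have e3 : (0:ℝ) < KD.γ ((2:ℝ) ^ ((n:ℝ) + 1 + p (n + 1))) :=
      KD.hγpos _ (Real.rpow_pos_of_pos two_pos _)
    rw [Kernels.zeta, Real.log_div (by positivity) (ne_of_gt e3),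
      Real.log_mul (by positivity) (ne_of_gt e2),
      Real.log_mul (ne_of_gt hlog2) (ne_of_gt e1), Real.log_rpow two_pos]
    ring
  -- linear bound on |log ζ|
  set D : ℝ := |Real.log (Real.log 2)| + Real.log 2 + ak + bk + ag + 2 * bg with hD
  set E : ℝ := Real.log 2 + bk + bg with hE
  have hEpos : 0 < E := by rw [hE]; positivity
  have hDpos : 0 ≤ D := by rw [hD]; positivity
  have hδ1 : δ₀ ≤ 1 := hδ.2.le
  have hζb : ∀ n : ℤ, |Real.log (KD.zeta p n)| ≤ D + E * |(n:ℝ)| := by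
    intro n
    have h1 : |(n:ℝ) + p n| ≤ |(n:ℝ)| + 1 := by
      calc |(n:ℝ) + p n| ≤ |(n:ℝ)| + |p n| := abs_add_le _ _
        _ ≤ |(n:ℝ)| + 1 := by linarith [hp n]
    have h2 : |(n:ℝ) + 1 + p (n + 1)| ≤ |(n:ℝ)| + 2 := by
      calc |(n:ℝ) + 1 + p (n + 1)| ≤ |(n:ℝ) + 1| + |p (n + 1)| := abs_add_le _ _
        _ ≤ (|(n:ℝ)| + 1) + 1 := by
            have := abs_add_le (n:ℝ) 1
            have := hp (n + 1)
            simp only [abs_one] at *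
            linarith
        _ = |(n:ℝ)| + 2 := by ring
    have h3 := hkb ((n:ℝ) + p n)
    have h4 := hgb ((n:ℝ) + 1 + p (n + 1))
    have h3' : |Real.log (KD.k ((2:ℝ) ^ ((n:ℝ) + p n)))| ≤ ak + bk * |(n:ℝ)| + bk := by
      have h9 := mul_le_mul_of_nonneg_left h1 hbk
      have h10 : bk * (|(n:ℝ)| + 1) = bk * |(n:ℝ)| + bk := by ring
      linarith
    have h4' : |Real.log (KD.γ ((2:ℝ) ^ ((n:ℝ) + 1 + p (n + 1))))| ≤
        ag + bg * |(n:ℝ)| + 2 * bg := by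
      have h9 := mul_le_mul_of_nonneg_left h2 hbg
      have h10 : bg * (|(n:ℝ)| + 2) = bg * |(n:ℝ)| + 2 * bg := by ring
      linarith
    have h5 : |((n:ℝ) + p n) * Real.log 2| ≤ Real.log 2 * |(n:ℝ)| + Real.log 2 := by
      rw [abs_mul, abs_of_pos hlog2]
      have h9 := mul_le_mul_of_nonneg_right h1 hlog2.le
      have h10 : (|(n:ℝ)| + 1) * Real.log 2 = Real.log 2 * |(n:ℝ)| + Real.log 2 := by
        ring
      linarith
    rw [hlogζ n, abs_le]
    obtain ⟨h3a, h3b⟩ := abs_le.mp h3'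
    obtain ⟨h4a, h4b⟩ := abs_le.mp h4'
    obtain ⟨h5a, h5b⟩ := abs_le.mp h5
    have h6 : -|Real.log (Real.log 2)| ≤ Real.log (Real.log 2) := neg_abs_le _
    have h7 : Real.log (Real.log 2) ≤ |Real.log (Real.log 2)| := le_abs_self _
    rw [hD, hE]
    constructor <;> linarith
  -- linear bound on |log θ|
  set D' : ℝ := Real.log 2 + 2 * D + E with hD'
  set E' : ℝ := 2 * E with hE'
  have hD'0 : 0 ≤ D' := by rw [hD']; positivity
  have hE'0 : 0 ≤ E' := by rw [hE']; positivity
  have hlogθ : ∀ m : ℤ, Real.log (KD.thetaSeq p m) =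
      Real.log 2 + Real.log (KD.zeta p (m + 1)) - Real.log (KD.zeta p m) := by
    intro m
    rw [Kernels.thetaSeq, Real.log_div (ne_of_gt (mul_pos two_pos (hζpos (m + 1)))) (ne_of_gt (hζpos m)),
      Real.log_mul two_ne_zero (ne_of_gt (hζpos (m + 1)))]
  have hθb : ∀ m : ℤ, |Real.log (KD.thetaSeq p m)| ≤ D' + E' * |(m:ℝ)| := by
    intro m
    have h1 := hζb m
    have h2 := hζb (m + 1)
    have hc : |((m + 1 : ℤ) : ℝ)| ≤ |(m:ℝ)| + 1 := by
      push_cast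
      calc |(m:ℝ) + 1| ≤ |(m:ℝ)| + |(1:ℝ)| := abs_add_le _ _
        _ = |(m:ℝ)| + 1 := by rw [abs_one]
    have h2' : |Real.log (KD.zeta p (m + 1))| ≤ D + E * |(m:ℝ)| + E := by
      have h3 := mul_le_mul_of_nonneg_left hc hEpos.le
      have h4 : E * (|(m:ℝ)| + 1) = E * |(m:ℝ)| + E := by ring
      linarith
    rw [hlogθ m, abs_le]
    obtain ⟨h1a, h1b⟩ := abs_le.mp h1
    obtain ⟨h2a, h2b⟩ := abs_le.mp h2'
    rw [hD', hE']
    constructor <;> linarith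
  -- summability
  have hsum : ∀ n : ℤ, Summable (fun j : ℕ =>
      (2:ℝ) ^ (-((n:ℝ) + 1 + (j:ℝ))) * Real.log (KD.thetaSeq p (n + (j:ℤ)))) := by
    intro n
    set c1 : ℝ := (2:ℝ) ^ (-((n:ℝ) + 1)) * (D' + E' * |(n:ℝ)|) with hc1
    set c2 : ℝ := (2:ℝ) ^ (-((n:ℝ) + 1)) * E' with hc2
    have hs1 : Summable (fun j : ℕ => ((1:ℝ)/2) ^ j) :=
      summable_geometric_of_lt_one (by norm_num) (by norm_num)
    have hs2 : Summable (fun j : ℕ => (j:ℝ) * (1/2) ^ j) := by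
      have := summable_pow_mul_geometric_of_norm_lt_one (R := ℝ) 1
        (r := (1:ℝ)/2) (by rw [norm_eq_abs, abs_of_nonneg (by norm_num : (0:ℝ) ≤ 1/2)]; norm_num)
      simpa using this
    have hg : Summable (fun j : ℕ => c1 * (1/2) ^ j + c2 * ((j:ℝ) * (1/2) ^ j)) :=
      (hs1.mul_left c1).add (hs2.mul_left c2)
    apply Summable.of_norm_bounded hg
    intro j
    have hsplit : (2:ℝ) ^ (-((n:ℝ) + 1 + (j:ℝ))) =
        (2:ℝ) ^ (-((n:ℝ) + 1)) * (1/2 : ℝ) ^ j := by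
      rw [show -((n:ℝ) + 1 + (j:ℝ)) = -((n:ℝ) + 1) + (-(j:ℝ)) by ring,
        Real.rpow_add two_pos]
      congr 1
      rw [Real.rpow_neg two_pos.le, Real.rpow_natCast]
      simp [one_div, inv_pow]
    have hpos1 : (0:ℝ) < (2:ℝ) ^ (-((n:ℝ) + 1)) := Real.rpow_pos_of_pos two_pos _
    have hpos2 : (0:ℝ) < ((1:ℝ)/2) ^ j := by positivity
    have hb := hθb (n + (j:ℤ))
    have hcast : |((n + (j:ℤ) : ℤ) : ℝ)| ≤ |(n:ℝ)| + (j:ℝ) := by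
      push_cast
      calc |(n:ℝ) + (j:ℝ)| ≤ |(n:ℝ)| + |(j:ℝ)| := abs_add_le _ _
        _ = |(n:ℝ)| + (j:ℝ) := by rw [abs_of_nonneg (by positivity : (0:ℝ) ≤ (j:ℝ))]
    have hb' : |Real.log (KD.thetaSeq p (n + (j:ℤ)))| ≤
        (D' + E' * |(n:ℝ)|) + E' * (j:ℝ) := by
      have h9 := mul_le_mul_of_nonneg_left hcast hE'0
      have h10 : E' * (|(n:ℝ)| + (j:ℝ)) = E' * |(n:ℝ)| + E' * (j:ℝ) := by ring
      linarith
    rw [norm_eq_abs, abs_mul, hsplit, abs_of_pos (mul_pos hpos1 hpos2)]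
    calc (2:ℝ) ^ (-((n:ℝ) + 1)) * (1/2:ℝ) ^ j * |Real.log (KD.thetaSeq p (n + (j:ℤ)))|
        ≤ (2:ℝ) ^ (-((n:ℝ) + 1)) * (1/2:ℝ) ^ j * ((D' + E' * |(n:ℝ)|) + E' * (j:ℝ)) :=
          mul_le_mul_of_nonneg_left hb' (by positivity)
      _ = c1 * (1/2) ^ j + c2 * ((j:ℝ) * (1/2) ^ j) := by rw [hc1, hc2]; ring
  -- the tail sums
  set L : ℤ → ℝ := fun m => ∑' j : ℕ,
    (2:ℝ) ^ (-((m:ℝ) + 1 + (j:ℝ))) * Real.log (KD.thetaSeq p (m + (j:ℤ))) with hL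
  have hμ : ∀ m : ℤ, KD.mubar A p m =
      Real.exp (-A * (2:ℝ) ^ (m:ℝ)) * Real.exp (-((2:ℝ) ^ (m:ℝ)) * L m) := fun m => rfl
  have hLshift : ∀ m : ℤ, L m =
      (2:ℝ) ^ (-((m:ℝ) + 1)) * Real.log (KD.thetaSeq p m) + L (m + 1) := by
    intro m
    rw [hL]
    simp only
    rw [(hsum m).tsum_eq_zero_add]
    congr 1
    · norm_num
    · apply tsum_congr
      intro j
      have e1 : (m + ((j + 1 : ℕ) : ℤ)) = ((m + 1 : ℤ) + (j : ℤ)) := by push_cast; ring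
      have e2 : -((m:ℝ) + 1 + ((j + 1 : ℕ) : ℝ)) = -(((m + 1 : ℤ) : ℝ) + 1 + (j:ℝ)) := by
        push_cast
        ring
      rw [e1, e2]
  -- recurrence for μ̄
  have hrec : ∀ n : ℤ, KD.mubar A p (n + 1) = KD.thetaSeq p n * KD.mubar A p n ^ 2 := by
    intro n
    have e1 : ((n + 1 : ℤ) : ℝ) = (n:ℝ) + 1 := by push_cast; ring
    have hμ' : KD.mubar A p (n + 1) =
        Real.exp (-A * (2:ℝ) ^ ((n:ℝ) + 1)) *
          Real.exp (-((2:ℝ) ^ ((n:ℝ) + 1)) * L (n + 1)) := by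
      rw [hμ (n + 1), e1]
    have h2n : (2:ℝ) ^ ((n:ℝ) + 1) = 2 * (2:ℝ) ^ (n:ℝ) := by
      rw [Real.rpow_add two_pos, Real.rpow_one]; ring
    have hprod : (2:ℝ) ^ ((n:ℝ) + 1) * (2:ℝ) ^ (-((n:ℝ) + 1)) = 1 := by
      rw [Real.rpow_neg two_pos.le]
      exact mul_inv_cancel₀ (ne_of_gt (Real.rpow_pos_of_pos two_pos _))
    rw [hμ', hμ n, ← Real.exp_log (hθpos n), hLshift n]
    simp only [pow_two, ← Real.exp_add]
    rw [Real.exp_eq_exp]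
    linear_combination (-(A + L (n + 1) +
      (2:ℝ) ^ (-((n:ℝ) + 1)) * Real.log (KD.thetaSeq p n))) * h2n +
      Real.log (KD.thetaSeq p n) * hprod
  -- μ̄ positivity
  have hμpos : ∀ m : ℤ, 0 < KD.mubar A p m := by
    intro m
    rw [hμ m]
    positivity
  refine ⟨hsum, hrec, ?_, ?_⟩
  · intro n
    have hz1 : KD.zeta p n ≠ 0 := ne_of_gt (hζpos n)
    have hz2 : KD.zeta p (n + 1) ≠ 0 := ne_of_gt (hζpos (n + 1))
    have hm : KD.mubar A p n ≠ 0 := ne_of_gt (hμpos n)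
    rw [Kernels.mbar, Kernels.mbar, hrec n, Kernels.thetaSeq]
    field_simp
  · intro n
    have hz1 : KD.zeta p n ≠ 0 := ne_of_gt (hζpos n)
    have hz2 : KD.zeta p (n + 1) ≠ 0 := ne_of_gt (hζpos (n + 1))
    rw [Kernels.mbar, Kernels.mbar, hrec n, Kernels.thetaSeq]
    field_simp
end
end

section
/- Let δ₀ ∈ (0,1) and set c̄ := min{ᾱ, β̄} > 1. Then, uniformly over all sequences p = (p_n)_{n∈ℤ} with |p_n| ≤ δ₀: (i) there is a constant C such that |ζ_n(p) − (k₀ ln 2/γ₀) 2^{−(n+p_n)}| ≤ C 2^{(c̄−1)n} for all n ≤ 0; (ii) ζ_n(p) / ((ln 2) 2^{α(n+p_n)} 2^{−β(n+1+p_{n+1})}) → 1 as n → +∞, uniformly in p; (iii) there is a constant C such that |θ_n(p) − 2^{p_n − p_{n+1}}| ≤ C 2^{c̄ n} for all n ≤ 0; (iv) θ_n(p) / (2^{α−β+1} 2^{α(p_{n+1}−p_n)} 2^{−β(p_{n+2}−p_{n+1})}) → 1 as n → +∞, uniformly in p. -/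
open Real MeasureTheory Filter Topology Asymptotics

noncomputable section

open Real MeasureTheory Filter Topology Asymptotics

section ZTAux

lemma aux_two_rpow_le {E F : ℝ} (h : E ≤ F) : (2:ℝ) ^ E ≤ (2:ℝ) ^ F :=
  Real.rpow_le_rpow_of_exponent_le one_le_two h

lemma aux_eight_eq : (8:ℝ) = (2:ℝ) ^ (3:ℝ) := by
  rw [show (3:ℝ) = ((3:ℕ):ℝ) by norm_num, Real.rpow_natCast]; norm_num

lemma aux_four_eq : (4:ℝ) = (2:ℝ) ^ (2:ℝ) := by
  rw [show (2:ℝ) = ((2:ℕ):ℝ) by norm_num, Real.rpow_natCast]; norm_num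

lemma aux_bound_on_Ioc {f : ℝ → ℝ} {f₀ a M : ℝ} (ha : 0 < a) (hM : 0 < M)
    (hc : ContinuousOn f (Set.Ioi 0))
    (hO : (fun ξ => f ξ - f₀) =O[𝓝[>] (0:ℝ)] fun ξ : ℝ => ξ ^ a) :
    ∃ C : ℝ, 0 < C ∧ ∀ ξ : ℝ, 0 < ξ → ξ ≤ M → |f ξ - f₀| ≤ C * ξ ^ a := by
  obtain ⟨C₀, hC₀⟩ := hO.bound
  rw [eventually_nhdsWithin_iff] at hC₀
  rw [Metric.eventually_nhds_iff] at hC₀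
  obtain ⟨ε, hε, hball⟩ := hC₀
  set δ : ℝ := min (ε/2) M with hδdef
  have hδpos : 0 < δ := lt_min (half_pos hε) hM
  have hδM : δ ≤ M := min_le_right _ _
  have hsmall : ∀ ξ : ℝ, 0 < ξ → ξ ≤ δ → |f ξ - f₀| ≤ C₀ * ξ ^ a := by
    intro ξ hξ hξδ
    have hd : dist ξ (0:ℝ) < ε := by
      rw [Real.dist_eq, sub_zero, abs_of_pos hξ]
      calc ξ ≤ δ := hξδ
        _ ≤ ε/2 := min_le_left _ _
        _ < ε := by linarith
    have := hball hd hξ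
    simpa [Real.norm_eq_abs, abs_of_pos (Real.rpow_pos_of_pos hξ a)] using this
  have hcomp : IsCompact (Set.Icc δ M) := isCompact_Icc
  have hsub : Set.Icc δ M ⊆ Set.Ioi 0 := fun x hx => lt_of_lt_of_le hδpos hx.1
  obtain ⟨C₁, hC₁⟩ := hcomp.exists_bound_of_continuousOn
    ((hc.mono hsub).sub continuousOn_const)
  refine ⟨max C₀ 0 + max C₁ 0 / δ ^ a + 1, by positivity, fun ξ hξ hξM => ?_⟩
  have hξa : 0 < ξ ^ a := Real.rpow_pos_of_pos hξ a
  by_cases hcase : ξ ≤ δ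
  · calc |f ξ - f₀| ≤ C₀ * ξ ^ a := hsmall ξ hξ hcase
      _ ≤ (max C₀ 0 + max C₁ 0 / δ ^ a + 1) * ξ ^ a := by
        have h1 : (0:ℝ) ≤ max C₁ 0 / δ ^ a := by positivity
        nlinarith [le_max_left C₀ (0:ℝ)]
  · push_neg at hcase
    have hmem : ξ ∈ Set.Icc δ M := ⟨le_of_lt hcase, hξM⟩
    have h1 : |f ξ - f₀| ≤ max C₁ 0 := le_trans (by simpa using hC₁ ξ hmem) (le_max_left _ _)
    have h2 : δ ^ a ≤ ξ ^ a := Real.rpow_le_rpow (le_of_lt hδpos) (le_of_lt hcase) (le_of_lt ha)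
    have hδa : 0 < δ ^ a := Real.rpow_pos_of_pos hδpos a
    calc |f ξ - f₀| ≤ max C₁ 0 := h1
      _ = max C₁ 0 / δ ^ a * δ ^ a := by field_simp
      _ ≤ max C₁ 0 / δ ^ a * ξ ^ a := by gcongr
      _ ≤ (max C₀ 0 + max C₁ 0 / δ ^ a + 1) * ξ ^ a := by
        nlinarith [le_max_right C₀ (0:ℝ), le_max_left C₀ (0:ℝ)]

lemma aux_pos_lower_on_Ioc {f : ℝ → ℝ} {f₀ a C M : ℝ} (ha : 0 < a) (hf₀ : 0 < f₀)
    (hC : 0 < C) (hM : 0 < M) (hc : ContinuousOn f (Set.Ioi 0))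
    (hpos : ∀ ξ : ℝ, 0 < ξ → 0 < f ξ)
    (hb : ∀ ξ : ℝ, 0 < ξ → ξ ≤ M → |f ξ - f₀| ≤ C * ξ ^ a) :
    ∃ c : ℝ, 0 < c ∧ ∀ ξ : ℝ, 0 < ξ → ξ ≤ M → c ≤ f ξ := by
  set δ : ℝ := min M ((f₀ / (2*C)) ^ (1/a)) with hδdef
  have hq : 0 < f₀ / (2*C) := by positivity
  have hδpos : 0 < δ := lt_min hM (Real.rpow_pos_of_pos hq _)
  have hδM : δ ≤ M := min_le_left _ _
  have hδa : δ ^ a ≤ f₀ / (2*C) := by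
    calc δ ^ a ≤ ((f₀ / (2*C)) ^ (1/a)) ^ a :=
          Real.rpow_le_rpow (le_of_lt hδpos) (min_le_right _ _) (le_of_lt ha)
      _ = f₀ / (2*C) := by
          rw [← Real.rpow_mul hq.le, one_div, inv_mul_cancel₀ ha.ne', Real.rpow_one]
  have hlow : ∀ ξ : ℝ, 0 < ξ → ξ ≤ δ → f₀/2 ≤ f ξ := by
    intro ξ hξ hξδ
    have h1 : |f ξ - f₀| ≤ C * ξ ^ a := hb ξ hξ (le_trans hξδ hδM)
    have h2 : ξ ^ a ≤ δ ^ a := Real.rpow_le_rpow hξ.le hξδ ha.le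
    have h3 : C * ξ ^ a ≤ f₀ / 2 := by
      calc C * ξ ^ a ≤ C * (f₀ / (2*C)) := by nlinarith
        _ = f₀ / 2 := by field_simp
    have := abs_le.mp h1
    linarith [this.1]
  have hcomp : IsCompact (Set.Icc δ M) := isCompact_Icc
  have hne : (Set.Icc δ M).Nonempty := ⟨δ, le_refl _, hδM⟩
  have hsub : Set.Icc δ M ⊆ Set.Ioi 0 := fun x hx => lt_of_lt_of_le hδpos hx.1
  obtain ⟨x₀, hx₀mem, hx₀min⟩ := hcomp.exists_isMinOn hne (hc.mono hsub)
  have hx₀pos : 0 < f x₀ := hpos x₀ (hsub hx₀mem)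
  refine ⟨min (f₀/2) (f x₀), lt_min (by positivity) hx₀pos, fun ξ hξ hξM => ?_⟩
  by_cases hcase : ξ ≤ δ
  · exact le_trans (min_le_left _ _) (hlow ξ hξ hcase)
  · push_neg at hcase
    exact le_trans (min_le_right _ _) (hx₀min ⟨hcase.le, hξM⟩)

lemma aux_ratio_infty {g : ℝ → ℝ} {β βt : ℝ} (hβt : βt < β)
    (hO : (fun ξ => g ξ - ξ ^ β) =O[atTop] fun ξ : ℝ => ξ ^ βt) :
    Tendsto (fun ξ : ℝ => g ξ / ξ ^ β) atTop (𝓝 1) := by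
  have h2 : (fun ξ : ℝ => (g ξ - ξ ^ β) * ξ ^ (-β)) =O[atTop]
      fun ξ : ℝ => ξ ^ βt * ξ ^ (-β) := hO.mul (isBigO_refl _ _)
  have e1 : (fun ξ : ℝ => (g ξ - ξ ^ β) * ξ ^ (-β)) =ᶠ[atTop]
      fun ξ : ℝ => g ξ / ξ ^ β - 1 := by
    filter_upwards [eventually_gt_atTop (0:ℝ)] with ξ hξ
    have hb : (0:ℝ) < ξ ^ β := Real.rpow_pos_of_pos hξ β
    rw [Real.rpow_neg hξ.le]
    field_simp
  have e2 : (fun ξ : ℝ => ξ ^ βt * ξ ^ (-β)) =ᶠ[atTop]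
      fun ξ : ℝ => ξ ^ (βt - β) := by
    filter_upwards [eventually_gt_atTop (0:ℝ)] with ξ hξ
    rw [← Real.rpow_add hξ, sub_eq_add_neg]
  have h1 : (fun ξ : ℝ => g ξ / ξ ^ β - 1) =O[atTop] fun ξ : ℝ => ξ ^ (βt - β) :=
    (e1.symm.trans_isBigO (h2.congr' EventuallyEq.rfl e2))
  have h3 : Tendsto (fun ξ : ℝ => ξ ^ (βt - β)) atTop (𝓝 0) := by
    have := tendsto_rpow_neg_atTop (y := β - βt) (by linarith)
    simpa [neg_sub] using this
  have h4 := h1.trans_tendsto h3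
  have := h4.add_const 1
  simpa using this

lemma aux_threshold (Ξ : ℝ) : ∃ N : ℤ, ∀ n : ℤ, N ≤ n → Ξ ≤ (2:ℝ) ^ ((n:ℝ) - 1) := by
  refine ⟨⌈Real.logb 2 (max Ξ 1)⌉ + 1, fun n hn => ?_⟩
  have hpos : (0:ℝ) < max Ξ 1 := lt_of_lt_of_le one_pos (le_max_right Ξ 1)
  have h1 : max Ξ 1 ≤ (2:ℝ) ^ ((n:ℝ) - 1) := by
    rw [← Real.rpow_logb two_pos (by norm_num) hpos]
    apply Real.rpow_le_rpow_of_exponent_le one_le_two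
    have h2 : (⌈Real.logb 2 (max Ξ 1)⌉ : ℝ) + 1 ≤ (n:ℝ) := by exact_mod_cast hn
    have := Int.le_ceil (Real.logb 2 (max Ξ 1))
    linarith
  exact le_trans (le_max_left _ _) h1

lemma aux_prod_close {A B ε : ℝ} (hε : 0 < ε)
    (hA : |A - 1| ≤ min (ε/4) (1/2)) (hB : |B - 1| ≤ min (ε/4) (1/2)) :
    |A * B - 1| ≤ ε := by
  have h1 : |A - 1| ≤ ε/4 := le_trans hA (min_le_left _ _)
  have h2 : |A - 1| ≤ 1/2 := le_trans hA (min_le_right _ _)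
  have h3 : |B - 1| ≤ ε/4 := le_trans hB (min_le_left _ _)
  have h4 : |B - 1| ≤ 1/2 := le_trans hB (min_le_right _ _)
  have e : A * B - 1 = (A - 1) * (B - 1) + ((A - 1) + (B - 1)) := by ring
  calc |A * B - 1| = |(A - 1) * (B - 1) + ((A - 1) + (B - 1))| := by rw [e]
    _ ≤ |(A - 1) * (B - 1)| + |(A - 1) + (B - 1)| := abs_add_le _ _
    _ ≤ |A - 1| * |B - 1| + (|A - 1| + |B - 1|) := by
        rw [abs_mul]; gcongr; exact abs_add_le _ _
    _ ≤ ε := by nlinarith [abs_nonneg (A - 1), abs_nonneg (B - 1)]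

lemma aux_div_close {A B ε : ℝ} (hε : 0 < ε)
    (hA : |A - 1| ≤ min (ε/8) (1/2)) (hB : |B - 1| ≤ min (ε/8) (1/2)) :
    |A / B - 1| ≤ ε := by
  have h1 : |A - 1| ≤ ε/8 := le_trans hA (min_le_left _ _)
  have h4 : |B - 1| ≤ 1/2 := le_trans hB (min_le_right _ _)
  have h3 : |B - 1| ≤ ε/8 := le_trans hB (min_le_left _ _)
  have hBpos : (0:ℝ) < B := by
    have := abs_le.mp h4
    linarith [this.1]
  rw [div_sub_one hBpos.ne', abs_div, abs_of_pos hBpos, div_le_iff₀ hBpos]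
  have h5 : |A - B| ≤ |A - 1| + |B - 1| := by
    calc |A - B| = |(A - 1) - (B - 1)| := by ring_nf
      _ ≤ |A - 1| + |B - 1| := abs_sub _ _
  have hB2 : 1/2 ≤ B := by linarith [(abs_le.mp h4).1]
  nlinarith

lemma kernel_consts (KD : Kernels) : ∃ Ck Cg ck cγ Gm : ℝ,
    0 < Ck ∧ 0 < Cg ∧ 0 < ck ∧ 0 < cγ ∧ 0 < Gm ∧
    (∀ ξ : ℝ, 0 < ξ → ξ ≤ 8 → |KD.k ξ - KD.k₀| ≤ Ck * ξ ^ KD.αb) ∧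
    (∀ ξ : ℝ, 0 < ξ → ξ ≤ 8 → |KD.γ ξ - KD.γ₀| ≤ Cg * ξ ^ KD.βb) ∧
    (∀ ξ : ℝ, 0 < ξ → ξ ≤ 8 → ck ≤ KD.k ξ) ∧
    (∀ ξ : ℝ, 0 < ξ → ξ ≤ 8 → cγ ≤ KD.γ ξ) ∧
    (∀ ξ : ℝ, 0 < ξ → ξ ≤ 8 → KD.γ ξ ≤ Gm) := by
  have hαb0 : (0:ℝ) < KD.αb := lt_trans one_pos KD.hαb
  have hβb0 : (0:ℝ) < KD.βb := lt_trans one_pos KD.hβb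
  obtain ⟨Ck, hCk, hkb⟩ := aux_bound_on_Ioc hαb0 (by norm_num : (0:ℝ) < 8)
    KD.hkC2.continuousOn KD.hkZero
  obtain ⟨Cg, hCg, hgb⟩ := aux_bound_on_Ioc hβb0 (by norm_num : (0:ℝ) < 8)
    KD.hγC2.continuousOn KD.hγZero
  obtain ⟨ck, hck, hkl⟩ := aux_pos_lower_on_Ioc hαb0 KD.hk₀ hCk (by norm_num)
    KD.hkC2.continuousOn KD.hkpos hkb
  obtain ⟨cγ, hcγ, hγl⟩ := aux_pos_lower_on_Ioc hβb0 KD.hγ₀ hCg (by norm_num)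
    KD.hγC2.continuousOn KD.hγpos hgb
  refine ⟨Ck, Cg, ck, cγ, KD.γ₀ + Cg * (8:ℝ) ^ KD.βb, hCk, hCg, hck, hcγ,
    add_pos KD.hγ₀ (mul_pos hCg (Real.rpow_pos_of_pos (by norm_num) _)), hkb, hgb, hkl, hγl, ?_⟩
  intro ξ h1 h2
  have h3 := (abs_le.mp (hgb ξ h1 h2)).2
  have h4 : ξ ^ KD.βb ≤ (8:ℝ) ^ KD.βb := Real.rpow_le_rpow h1.le h2 hβb0.le
  nlinarith

end ZTAux


set_option maxHeartbeats 1600000 in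
lemma zt_part1 (KD : Kernels) (δ₀ : ℝ) (hδ : 0 < δ₀ ∧ δ₀ < 1) :
    ∃ C : ℝ, 0 < C ∧ ∀ p : ℤ → ℝ, (∀ n, |p n| ≤ δ₀) → ∀ n : ℤ, n ≤ 0 →
      |KD.zeta p n - KD.k₀ * Real.log 2 / KD.γ₀ * (2:ℝ) ^ (-((n:ℝ) + p n))| ≤
        C * (2:ℝ) ^ ((min KD.αb KD.βb - 1) * (n:ℝ)) := by
  obtain ⟨hδ0, hδ1⟩ := hδ
  obtain ⟨Ck, Cg, ck, cγ, Gm, hCk, hCg, hck, hcγ, hGm, hkb, hgb, hkl, hγl, hγu⟩ :=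
    kernel_consts KD
  have hαb := KD.hαb
  have hβb := KD.hβb
  have hk₀ := KD.hk₀
  have hγ₀ := KD.hγ₀
  have hL : (0:ℝ) < Real.log 2 := Real.log_pos one_lt_two
  have hcb1 : 1 < min KD.αb KD.βb := lt_min hαb hβb
  have hcbα : min KD.αb KD.βb ≤ KD.αb := min_le_left _ _
  have hcbβ : min KD.αb KD.βb ≤ KD.βb := min_le_right _ _
  refine ⟨Real.log 2 * (KD.γ₀ * Ck * (2:ℝ) ^ KD.αb + KD.k₀ * Cg * (2:ℝ) ^ (2*KD.βb+1)) /
      (cγ * KD.γ₀), by positivity, ?_⟩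
  intro p hp n hn
  have hn0 : (n:ℝ) ≤ 0 := by exact_mod_cast hn
  have hpn := abs_le.mp (hp n)
  have hpn1 := abs_le.mp (hp (n+1))
  have hupos : (0:ℝ) < (2:ℝ) ^ ((n:ℝ) + p n) := Real.rpow_pos_of_pos two_pos _
  have hvpos : (0:ℝ) < (2:ℝ) ^ ((n:ℝ) + 1 + p (n+1)) := Real.rpow_pos_of_pos two_pos _
  have hu8 : (2:ℝ) ^ ((n:ℝ) + p n) ≤ 8 := by
    rw [aux_eight_eq]; exact aux_two_rpow_le (by linarith)
  have hv8 : (2:ℝ) ^ ((n:ℝ) + 1 + p (n+1)) ≤ 8 := by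
    rw [aux_eight_eq]; exact aux_two_rpow_le (by linarith)
  have hγv := KD.hγpos _ hvpos
  have hγvl := hγl _ hvpos hv8
  have hku := abs_le.mp (hkb _ hupos hu8)
  have hγvb := abs_le.mp (hgb _ hvpos hv8)
  have hkey : KD.zeta p n - KD.k₀ * Real.log 2 / KD.γ₀ * (2:ℝ) ^ (-((n:ℝ) + p n)) =
      Real.log 2 * (2:ℝ) ^ (-((n:ℝ) + p n)) *
        ((KD.k ((2:ℝ) ^ ((n:ℝ) + p n)) - KD.k₀) * KD.γ₀ -
          KD.k₀ * (KD.γ ((2:ℝ) ^ ((n:ℝ) + 1 + p (n+1))) - KD.γ₀)) /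
        (KD.γ ((2:ℝ) ^ ((n:ℝ) + 1 + p (n+1))) * KD.γ₀) := by
    simp only [Kernels.zeta]
    field_simp
    ring
  rw [hkey, abs_div, abs_mul, abs_mul, abs_of_pos hL,
    abs_of_pos (Real.rpow_pos_of_pos two_pos _), abs_of_pos (mul_pos hγv hγ₀)]
  have hnum : |(KD.k ((2:ℝ) ^ ((n:ℝ) + p n)) - KD.k₀) * KD.γ₀ -
      KD.k₀ * (KD.γ ((2:ℝ) ^ ((n:ℝ) + 1 + p (n+1))) - KD.γ₀)| ≤
      KD.γ₀ * (Ck * ((2:ℝ) ^ ((n:ℝ) + p n)) ^ KD.αb) +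
        KD.k₀ * (Cg * ((2:ℝ) ^ ((n:ℝ) + 1 + p (n+1))) ^ KD.βb) := by
    rw [abs_le]
    constructor
    · nlinarith [mul_le_mul_of_nonneg_right hku.1 hγ₀.le,
        mul_le_mul_of_nonneg_left hγvb.2 hk₀.le]
    · nlinarith [mul_le_mul_of_nonneg_right hku.2 hγ₀.le,
        mul_le_mul_of_nonneg_left hγvb.1 hk₀.le]
  have hA : (2:ℝ) ^ (-((n:ℝ) + p n)) * ((2:ℝ) ^ ((n:ℝ) + p n)) ^ KD.αb ≤
      (2:ℝ) ^ KD.αb * (2:ℝ) ^ ((min KD.αb KD.βb - 1) * (n:ℝ)) := by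
    calc (2:ℝ) ^ (-((n:ℝ) + p n)) * ((2:ℝ) ^ ((n:ℝ) + p n)) ^ KD.αb
        = (2:ℝ) ^ (-((n:ℝ) + p n) + ((n:ℝ) + p n) * KD.αb) := by
          rw [← Real.rpow_mul (by norm_num : (0:ℝ) ≤ 2), ← Real.rpow_add two_pos]
      _ ≤ (2:ℝ) ^ (KD.αb + (min KD.αb KD.βb - 1) * (n:ℝ)) := by
          apply aux_two_rpow_le
          nlinarith [mul_le_mul_of_nonneg_right
              (show (n:ℝ) + p n ≤ (n:ℝ) + δ₀ by linarith)
              (show (0:ℝ) ≤ KD.αb - 1 by linarith),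
            mul_nonpos_of_nonneg_of_nonpos
              (show (0:ℝ) ≤ KD.αb - min KD.αb KD.βb by linarith) hn0,
            mul_le_mul_of_nonneg_left hδ1.le (show (0:ℝ) ≤ KD.αb - 1 by linarith)]
      _ = (2:ℝ) ^ KD.αb * (2:ℝ) ^ ((min KD.αb KD.βb - 1) * (n:ℝ)) :=
          Real.rpow_add two_pos _ _
  have hB : (2:ℝ) ^ (-((n:ℝ) + p n)) * ((2:ℝ) ^ ((n:ℝ) + 1 + p (n+1))) ^ KD.βb ≤
      (2:ℝ) ^ (2*KD.βb+1) * (2:ℝ) ^ ((min KD.αb KD.βb - 1) * (n:ℝ)) := by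
    calc (2:ℝ) ^ (-((n:ℝ) + p n)) * ((2:ℝ) ^ ((n:ℝ) + 1 + p (n+1))) ^ KD.βb
        = (2:ℝ) ^ (-((n:ℝ) + p n) + ((n:ℝ) + 1 + p (n+1)) * KD.βb) := by
          rw [← Real.rpow_mul (by norm_num : (0:ℝ) ≤ 2), ← Real.rpow_add two_pos]
      _ ≤ (2:ℝ) ^ ((2*KD.βb+1) + (min KD.αb KD.βb - 1) * (n:ℝ)) := by
          apply aux_two_rpow_le
          nlinarith [mul_le_mul_of_nonneg_right
              (show (n:ℝ) + 1 + p (n+1) ≤ (n:ℝ) + 1 + δ₀ by linarith)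
              (show (0:ℝ) ≤ KD.βb by linarith),
            mul_nonpos_of_nonneg_of_nonpos
              (show (0:ℝ) ≤ KD.βb - min KD.αb KD.βb by linarith) hn0,
            mul_le_mul_of_nonneg_left hδ1.le (show (0:ℝ) ≤ KD.βb by linarith)]
      _ = (2:ℝ) ^ (2*KD.βb+1) * (2:ℝ) ^ ((min KD.αb KD.βb - 1) * (n:ℝ)) :=
          Real.rpow_add two_pos _ _
  calc Real.log 2 * (2:ℝ) ^ (-((n:ℝ) + p n)) *
        |(KD.k ((2:ℝ) ^ ((n:ℝ) + p n)) - KD.k₀) * KD.γ₀ -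
          KD.k₀ * (KD.γ ((2:ℝ) ^ ((n:ℝ) + 1 + p (n+1))) - KD.γ₀)| /
        (KD.γ ((2:ℝ) ^ ((n:ℝ) + 1 + p (n+1))) * KD.γ₀)
      ≤ Real.log 2 * (2:ℝ) ^ (-((n:ℝ) + p n)) *
        (KD.γ₀ * (Ck * ((2:ℝ) ^ ((n:ℝ) + p n)) ^ KD.αb) +
          KD.k₀ * (Cg * ((2:ℝ) ^ ((n:ℝ) + 1 + p (n+1))) ^ KD.βb)) /
        (cγ * KD.γ₀) := by
        apply div_le_div₀ (by positivity)
          (mul_le_mul_of_nonneg_left hnum (by positivity))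
          (by positivity) (mul_le_mul_of_nonneg_right hγvl hγ₀.le)
    _ = (Real.log 2 / (cγ * KD.γ₀)) *
        (KD.γ₀ * Ck * ((2:ℝ) ^ (-((n:ℝ) + p n)) * ((2:ℝ) ^ ((n:ℝ) + p n)) ^ KD.αb) +
          KD.k₀ * Cg * ((2:ℝ) ^ (-((n:ℝ) + p n)) * ((2:ℝ) ^ ((n:ℝ) + 1 + p (n+1))) ^ KD.βb)) := by
        ring
    _ ≤ (Real.log 2 / (cγ * KD.γ₀)) *
        (KD.γ₀ * Ck * ((2:ℝ) ^ KD.αb * (2:ℝ) ^ ((min KD.αb KD.βb - 1) * (n:ℝ))) +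
          KD.k₀ * Cg * ((2:ℝ) ^ (2*KD.βb+1) * (2:ℝ) ^ ((min KD.αb KD.βb - 1) * (n:ℝ)))) := by
        gcongr
    _ = Real.log 2 * (KD.γ₀ * Ck * (2:ℝ) ^ KD.αb + KD.k₀ * Cg * (2:ℝ) ^ (2*KD.βb+1)) /
        (cγ * KD.γ₀) * (2:ℝ) ^ ((min KD.αb KD.βb - 1) * (n:ℝ)) := by
        ring


lemma zeta_ratio_form (KD : Kernels) (p : ℤ → ℝ) (n : ℤ) :
    KD.zeta p n = Real.log 2 *
      (2:ℝ) ^ (KD.α * ((n:ℝ) + p n) - KD.β * ((n:ℝ) + 1 + p (n+1))) *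
      ((KD.k ((2:ℝ) ^ ((n:ℝ) + p n)) / ((2:ℝ) ^ ((n:ℝ) + p n)) ^ (KD.α + 1)) *
       (((2:ℝ) ^ ((n:ℝ) + 1 + p (n+1))) ^ KD.β / KD.γ ((2:ℝ) ^ ((n:ℝ) + 1 + p (n+1))))) := by
  have hγ := KD.hγpos _ (Real.rpow_pos_of_pos two_pos ((n:ℝ) + 1 + p (n+1)))
  simp only [Kernels.zeta]
  rw [← Real.rpow_mul (by norm_num : (0:ℝ) ≤ 2) ((n:ℝ) + p n) (KD.α + 1),
      ← Real.rpow_mul (by norm_num : (0:ℝ) ≤ 2) ((n:ℝ) + 1 + p (n+1)) KD.β]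
  have hk2 : (0:ℝ) < (2:ℝ) ^ (((n:ℝ) + p n) * (KD.α + 1)) := Real.rpow_pos_of_pos two_pos _
  field_simp
  have hpw : (2:ℝ) ^ (-((n:ℝ) + p n)) * 2 ^ (((n:ℝ) + p n) * (KD.α + 1)) =
      2 ^ (((n:ℝ) + p n) * KD.α - ((n:ℝ) + 1 + p (n+1)) * KD.β) *
        2 ^ (((n:ℝ) + 1 + p (n+1)) * KD.β) := by
    rw [← Real.rpow_add two_pos, ← Real.rpow_add two_pos]
    congr 1
    ring
  linear_combination KD.k ((2:ℝ) ^ ((n:ℝ) + p n)) * hpw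

lemma zeta_ratio_form_succ (KD : Kernels) (p : ℤ → ℝ) (n : ℤ) :
    KD.zeta p (n+1) = Real.log 2 *
      (2:ℝ) ^ (KD.α * ((n:ℝ) + 1 + p (n+1)) - KD.β * ((n:ℝ) + 2 + p (n+2))) *
      ((KD.k ((2:ℝ) ^ ((n:ℝ) + 1 + p (n+1))) / ((2:ℝ) ^ ((n:ℝ) + 1 + p (n+1))) ^ (KD.α + 1)) *
       (((2:ℝ) ^ ((n:ℝ) + 2 + p (n+2))) ^ KD.β / KD.γ ((2:ℝ) ^ ((n:ℝ) + 2 + p (n+2))))) := by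
  have h := zeta_ratio_form KD p (n+1)
  have h12 : (n:ℤ) + 1 + 1 = n + 2 := by ring
  rw [h12] at h
  push_cast at h
  rw [show (n:ℝ) + 1 + 1 = (n:ℝ) + 2 from by ring] at h
  exact h

lemma tendsto_eps_form {f : ℝ → ℝ} (h : Tendsto f atTop (𝓝 1)) :
    ∀ ε : ℝ, 0 < ε → ∃ Ξ : ℝ, ∀ ξ : ℝ, Ξ ≤ ξ → |f ξ - 1| ≤ ε := by
  intro ε hε
  have h2 := (Metric.tendsto_nhds.mp h) ε hε
  rw [eventually_atTop] at h2
  obtain ⟨Ξ, hΞ⟩ := h2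
  exact ⟨Ξ, fun ξ hξ => le_of_lt (by simpa [Real.dist_eq] using hΞ ξ hξ)⟩

lemma gamma_ratio_tendsto (KD : Kernels) :
    Tendsto (fun ξ : ℝ => ξ ^ KD.β / KD.γ ξ) atTop (𝓝 1) := by
  have h := aux_ratio_infty KD.hβt KD.hγInfty
  have h2 := h.inv₀ one_ne_zero
  simpa [inv_div] using h2

set_option maxHeartbeats 1600000 in
lemma zt_part2 (KD : Kernels) (δ₀ : ℝ) (hδ : 0 < δ₀ ∧ δ₀ < 1) :
    ∀ ε : ℝ, 0 < ε → ∃ N : ℤ, ∀ p : ℤ → ℝ, (∀ n, |p n| ≤ δ₀) → ∀ n : ℤ, N ≤ n →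
      |KD.zeta p n / (Real.log 2 * (2:ℝ) ^ (KD.α * ((n:ℝ) + p n)) *
          (2:ℝ) ^ (-(KD.β * ((n:ℝ) + 1 + p (n + 1))))) - 1| ≤ ε := by
  intro ε hε
  have hε₁ : 0 < min (ε/4) (1/2) := lt_min (by linarith) (by norm_num)
  obtain ⟨Ξ₁, hΞ₁⟩ := tendsto_eps_form KD.hkInfty _ hε₁
  obtain ⟨Ξ₂, hΞ₂⟩ := tendsto_eps_form (gamma_ratio_tendsto KD) _ hε₁
  obtain ⟨N, hN⟩ := aux_threshold (max Ξ₁ Ξ₂)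
  refine ⟨N, fun p hp n hn => ?_⟩
  have hδ1 := hδ.2
  have hpn := abs_le.mp (hp n)
  have hpn1 := abs_le.mp (hp (n+1))
  have hL : (0:ℝ) < Real.log 2 := Real.log_pos one_lt_two
  have hu : Ξ₁ ≤ (2:ℝ) ^ ((n:ℝ) + p n) :=
    le_trans (le_trans (le_max_left _ _) (hN n hn)) (aux_two_rpow_le (by linarith))
  have hv : Ξ₂ ≤ (2:ℝ) ^ ((n:ℝ) + 1 + p (n+1)) :=
    le_trans (le_trans (le_max_right _ _) (hN n hn)) (aux_two_rpow_le (by linarith))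
  have hA := hΞ₁ _ hu
  have hB := hΞ₂ _ hv
  have hden : Real.log 2 * (2:ℝ) ^ (KD.α * ((n:ℝ) + p n)) *
      (2:ℝ) ^ (-(KD.β * ((n:ℝ) + 1 + p (n+1)))) =
      Real.log 2 * (2:ℝ) ^ (KD.α * ((n:ℝ) + p n) - KD.β * ((n:ℝ) + 1 + p (n+1))) := by
    rw [mul_assoc, ← Real.rpow_add two_pos, ← sub_eq_add_neg]
  have hQ : KD.zeta p n / (Real.log 2 * (2:ℝ) ^ (KD.α * ((n:ℝ) + p n)) *
      (2:ℝ) ^ (-(KD.β * ((n:ℝ) + 1 + p (n+1))))) =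
      (KD.k ((2:ℝ) ^ ((n:ℝ) + p n)) / ((2:ℝ) ^ ((n:ℝ) + p n)) ^ (KD.α + 1)) *
      (((2:ℝ) ^ ((n:ℝ) + 1 + p (n+1))) ^ KD.β / KD.γ ((2:ℝ) ^ ((n:ℝ) + 1 + p (n+1)))) := by
    rw [hden, zeta_ratio_form KD p n]
    exact mul_div_cancel_left₀ _
      (mul_pos hL (Real.rpow_pos_of_pos two_pos _)).ne'
  rw [hQ]
  exact aux_prod_close hε hA hB


lemma aux_theta_alg {a X1 T Q0 Q1 : ℝ} (ha : a ≠ 0) (hX1 : X1 ≠ 0) (hT : T ≠ 0)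
    (hQ0 : Q0 ≠ 0) :
    2 * (a * X1 * Q1) / (a * (2 * X1 / T) * Q0) / T = Q1 / Q0 := by
  field_simp

lemma zeta_inv_form_succ (KD : Kernels) (p : ℤ → ℝ) (n : ℤ) :
    KD.zeta p (n+1) = Real.log 2 * (2:ℝ) ^ (-((n:ℝ) + 1 + p (n+1))) *
      KD.k ((2:ℝ) ^ ((n:ℝ) + 1 + p (n+1))) / KD.γ ((2:ℝ) ^ ((n:ℝ) + 2 + p (n+2))) := by
  simp only [Kernels.zeta]
  have h12 : (n:ℤ) + 1 + 1 = n + 2 := by ring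
  rw [h12]
  push_cast
  rw [show (n:ℝ) + 1 + 1 = (n:ℝ) + 2 from by ring]

set_option maxHeartbeats 1600000 in
lemma zt_part3 (KD : Kernels) (δ₀ : ℝ) (hδ : 0 < δ₀ ∧ δ₀ < 1) :
    ∃ C : ℝ, 0 < C ∧ ∀ p : ℤ → ℝ, (∀ n, |p n| ≤ δ₀) → ∀ n : ℤ, n ≤ 0 →
      |KD.thetaSeq p n - (2:ℝ) ^ (p n - p (n + 1))| ≤
        C * (2:ℝ) ^ (min KD.αb KD.βb * (n:ℝ)) := by
  obtain ⟨hδ0, hδ1⟩ := hδ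
  obtain ⟨Ck, Cg, ck, cγ, Gm, hCk, hCg, hck, hcγ, hGm, hkb, hgb, hkl, hγl, hγu⟩ :=
    kernel_consts KD
  have hαb := KD.hαb
  have hβb := KD.hβb
  have hk₀ := KD.hk₀
  have hγ₀ := KD.hγ₀
  have hL : (0:ℝ) < Real.log 2 := Real.log_pos one_lt_two
  have hcb1 : 1 < min KD.αb KD.βb := lt_min hαb hβb
  have hcbα : min KD.αb KD.βb ≤ KD.αb := min_le_left _ _
  have hcbβ : min KD.αb KD.βb ≤ KD.βb := min_le_right _ _
  refine ⟨4 * (Ck * Gm * ((2:ℝ) ^ KD.αb + (2:ℝ) ^ (2*KD.αb)) +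
      KD.k₀ * Cg * ((2:ℝ) ^ (2*KD.βb) + (2:ℝ) ^ (3*KD.βb))) / (ck * cγ),
    by positivity, ?_⟩
  intro p hp n hn
  have hn0 : (n:ℝ) ≤ 0 := by exact_mod_cast hn
  have hpn := abs_le.mp (hp n)
  have hpn1 := abs_le.mp (hp (n+1))
  have hpn2 := abs_le.mp (hp (n+2))
  have hupos : (0:ℝ) < (2:ℝ) ^ ((n:ℝ) + p n) := Real.rpow_pos_of_pos two_pos _
  have hvpos : (0:ℝ) < (2:ℝ) ^ ((n:ℝ) + 1 + p (n+1)) := Real.rpow_pos_of_pos two_pos _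
  have hwpos : (0:ℝ) < (2:ℝ) ^ ((n:ℝ) + 2 + p (n+2)) := Real.rpow_pos_of_pos two_pos _
  have hu8 : (2:ℝ) ^ ((n:ℝ) + p n) ≤ 8 := by
    rw [aux_eight_eq]; exact aux_two_rpow_le (by linarith)
  have hv8 : (2:ℝ) ^ ((n:ℝ) + 1 + p (n+1)) ≤ 8 := by
    rw [aux_eight_eq]; exact aux_two_rpow_le (by linarith)
  have hw8 : (2:ℝ) ^ ((n:ℝ) + 2 + p (n+2)) ≤ 8 := by
    rw [aux_eight_eq]; exact aux_two_rpow_le (by linarith)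
  have hkupos : 0 < KD.k ((2:ℝ) ^ ((n:ℝ) + p n)) := KD.hkpos _ hupos
  have hkvpos : 0 < KD.k ((2:ℝ) ^ ((n:ℝ) + 1 + p (n+1))) := KD.hkpos _ hvpos
  have hγvpos : 0 < KD.γ ((2:ℝ) ^ ((n:ℝ) + 1 + p (n+1))) := KD.hγpos _ hvpos
  have hγwpos : 0 < KD.γ ((2:ℝ) ^ ((n:ℝ) + 2 + p (n+2))) := KD.hγpos _ hwpos
  have hkul := hkl _ hupos hu8
  have hγwl := hγl _ hwpos hw8
  have hγvu := hγu _ hvpos hv8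
  have hγwu := hγu _ hwpos hw8
  -- the identity
  have hpd : (2:ℝ) ^ (p n - p (n+1)) =
      2 * (2:ℝ) ^ ((n:ℝ) + p n) / (2:ℝ) ^ ((n:ℝ) + 1 + p (n+1)) := by
    rw [eq_div_iff (Real.rpow_pos_of_pos two_pos _).ne', ← Real.rpow_add two_pos,
      show p n - p (n+1) + ((n:ℝ) + 1 + p (n+1)) = 1 + ((n:ℝ) + p n) from by ring,
      Real.rpow_add two_pos, Real.rpow_one]
  have hθ : KD.thetaSeq p n - (2:ℝ) ^ (p n - p (n+1)) =
      2 * (2:ℝ) ^ ((n:ℝ) + p n) / (2:ℝ) ^ ((n:ℝ) + 1 + p (n+1)) *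
        (KD.k ((2:ℝ) ^ ((n:ℝ) + 1 + p (n+1))) * KD.γ ((2:ℝ) ^ ((n:ℝ) + 1 + p (n+1))) -
          KD.k ((2:ℝ) ^ ((n:ℝ) + p n)) * KD.γ ((2:ℝ) ^ ((n:ℝ) + 2 + p (n+2)))) /
        (KD.k ((2:ℝ) ^ ((n:ℝ) + p n)) * KD.γ ((2:ℝ) ^ ((n:ℝ) + 2 + p (n+2)))) := by
    rw [hpd]
    simp only [Kernels.thetaSeq]
    rw [zeta_inv_form_succ KD p n]
    simp only [Kernels.zeta]
    rw [Real.rpow_neg (by norm_num : (0:ℝ) ≤ 2) ((n:ℝ) + p n),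
        Real.rpow_neg (by norm_num : (0:ℝ) ≤ 2) ((n:ℝ) + 1 + p (n+1))]
    field_simp
  rw [hθ, abs_div, abs_mul, abs_of_pos (show (0:ℝ) < 2 * (2:ℝ) ^ ((n:ℝ) + p n) /
      (2:ℝ) ^ ((n:ℝ) + 1 + p (n+1)) by positivity),
    abs_of_pos (mul_pos hkupos hγwpos)]
  -- numerator pieces
  have b1 : |(KD.k ((2:ℝ) ^ ((n:ℝ) + 1 + p (n+1))) - KD.k₀) *
      KD.γ ((2:ℝ) ^ ((n:ℝ) + 1 + p (n+1)))| ≤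
      Ck * ((2:ℝ) ^ ((n:ℝ) + 1 + p (n+1))) ^ KD.αb * Gm := by
    rw [abs_mul, abs_of_pos hγvpos]
    exact mul_le_mul (hkb _ hvpos hv8) hγvu hγvpos.le (by positivity)
  have b2 : |(KD.k ((2:ℝ) ^ ((n:ℝ) + p n)) - KD.k₀) *
      KD.γ ((2:ℝ) ^ ((n:ℝ) + 2 + p (n+2)))| ≤
      Ck * ((2:ℝ) ^ ((n:ℝ) + p n)) ^ KD.αb * Gm := by
    rw [abs_mul, abs_of_pos hγwpos]
    exact mul_le_mul (hkb _ hupos hu8) hγwu hγwpos.le (by positivity)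
  have b3 : |KD.k₀ * (KD.γ ((2:ℝ) ^ ((n:ℝ) + 1 + p (n+1))) - KD.γ₀)| ≤
      KD.k₀ * (Cg * ((2:ℝ) ^ ((n:ℝ) + 1 + p (n+1))) ^ KD.βb) := by
    rw [abs_mul, abs_of_pos hk₀]
    exact mul_le_mul_of_nonneg_left (hgb _ hvpos hv8) hk₀.le
  have b4 : |KD.k₀ * (KD.γ ((2:ℝ) ^ ((n:ℝ) + 2 + p (n+2))) - KD.γ₀)| ≤
      KD.k₀ * (Cg * ((2:ℝ) ^ ((n:ℝ) + 2 + p (n+2))) ^ KD.βb) := by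
    rw [abs_mul, abs_of_pos hk₀]
    exact mul_le_mul_of_nonneg_left (hgb _ hwpos hw8) hk₀.le
  -- power bounds
  have pu : ((2:ℝ) ^ ((n:ℝ) + p n)) ^ KD.αb ≤
      (2:ℝ) ^ KD.αb * (2:ℝ) ^ (min KD.αb KD.βb * (n:ℝ)) := by
    calc ((2:ℝ) ^ ((n:ℝ) + p n)) ^ KD.αb = (2:ℝ) ^ (((n:ℝ) + p n) * KD.αb) := by
          rw [← Real.rpow_mul (by norm_num : (0:ℝ) ≤ 2)]
      _ ≤ (2:ℝ) ^ (KD.αb + min KD.αb KD.βb * (n:ℝ)) := by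
          apply aux_two_rpow_le
          nlinarith [mul_le_mul_of_nonneg_right
              (show (n:ℝ) + p n ≤ (n:ℝ) + 1 by linarith)
              (show (0:ℝ) ≤ KD.αb by linarith),
            mul_nonpos_of_nonneg_of_nonpos
              (show (0:ℝ) ≤ KD.αb - min KD.αb KD.βb by linarith) hn0]
      _ = (2:ℝ) ^ KD.αb * (2:ℝ) ^ (min KD.αb KD.βb * (n:ℝ)) := Real.rpow_add two_pos _ _
  have pv_a : ((2:ℝ) ^ ((n:ℝ) + 1 + p (n+1))) ^ KD.αb ≤
      (2:ℝ) ^ (2*KD.αb) * (2:ℝ) ^ (min KD.αb KD.βb * (n:ℝ)) := by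
    calc ((2:ℝ) ^ ((n:ℝ) + 1 + p (n+1))) ^ KD.αb
        = (2:ℝ) ^ (((n:ℝ) + 1 + p (n+1)) * KD.αb) := by
          rw [← Real.rpow_mul (by norm_num : (0:ℝ) ≤ 2)]
      _ ≤ (2:ℝ) ^ (2*KD.αb + min KD.αb KD.βb * (n:ℝ)) := by
          apply aux_two_rpow_le
          nlinarith [mul_le_mul_of_nonneg_right
              (show (n:ℝ) + 1 + p (n+1) ≤ (n:ℝ) + 2 by linarith)
              (show (0:ℝ) ≤ KD.αb by linarith),
            mul_nonpos_of_nonneg_of_nonpos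
              (show (0:ℝ) ≤ KD.αb - min KD.αb KD.βb by linarith) hn0]
      _ = (2:ℝ) ^ (2*KD.αb) * (2:ℝ) ^ (min KD.αb KD.βb * (n:ℝ)) := Real.rpow_add two_pos _ _
  have pv_b : ((2:ℝ) ^ ((n:ℝ) + 1 + p (n+1))) ^ KD.βb ≤
      (2:ℝ) ^ (2*KD.βb) * (2:ℝ) ^ (min KD.αb KD.βb * (n:ℝ)) := by
    calc ((2:ℝ) ^ ((n:ℝ) + 1 + p (n+1))) ^ KD.βb
        = (2:ℝ) ^ (((n:ℝ) + 1 + p (n+1)) * KD.βb) := by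
          rw [← Real.rpow_mul (by norm_num : (0:ℝ) ≤ 2)]
      _ ≤ (2:ℝ) ^ (2*KD.βb + min KD.αb KD.βb * (n:ℝ)) := by
          apply aux_two_rpow_le
          nlinarith [mul_le_mul_of_nonneg_right
              (show (n:ℝ) + 1 + p (n+1) ≤ (n:ℝ) + 2 by linarith)
              (show (0:ℝ) ≤ KD.βb by linarith),
            mul_nonpos_of_nonneg_of_nonpos
              (show (0:ℝ) ≤ KD.βb - min KD.αb KD.βb by linarith) hn0]
      _ = (2:ℝ) ^ (2*KD.βb) * (2:ℝ) ^ (min KD.αb KD.βb * (n:ℝ)) := Real.rpow_add two_pos _ _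
  have pw : ((2:ℝ) ^ ((n:ℝ) + 2 + p (n+2))) ^ KD.βb ≤
      (2:ℝ) ^ (3*KD.βb) * (2:ℝ) ^ (min KD.αb KD.βb * (n:ℝ)) := by
    calc ((2:ℝ) ^ ((n:ℝ) + 2 + p (n+2))) ^ KD.βb
        = (2:ℝ) ^ (((n:ℝ) + 2 + p (n+2)) * KD.βb) := by
          rw [← Real.rpow_mul (by norm_num : (0:ℝ) ≤ 2)]
      _ ≤ (2:ℝ) ^ (3*KD.βb + min KD.αb KD.βb * (n:ℝ)) := by
          apply aux_two_rpow_le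
          nlinarith [mul_le_mul_of_nonneg_right
              (show (n:ℝ) + 2 + p (n+2) ≤ (n:ℝ) + 3 by linarith)
              (show (0:ℝ) ≤ KD.βb by linarith),
            mul_nonpos_of_nonneg_of_nonpos
              (show (0:ℝ) ≤ KD.βb - min KD.αb KD.βb by linarith) hn0]
      _ = (2:ℝ) ^ (3*KD.βb) * (2:ℝ) ^ (min KD.αb KD.βb * (n:ℝ)) := Real.rpow_add two_pos _ _
  have hDfull : |KD.k ((2:ℝ) ^ ((n:ℝ) + 1 + p (n+1))) * KD.γ ((2:ℝ) ^ ((n:ℝ) + 1 + p (n+1))) -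
      KD.k ((2:ℝ) ^ ((n:ℝ) + p n)) * KD.γ ((2:ℝ) ^ ((n:ℝ) + 2 + p (n+2)))| ≤
      (Ck * Gm * ((2:ℝ) ^ KD.αb + (2:ℝ) ^ (2*KD.αb)) +
        KD.k₀ * Cg * ((2:ℝ) ^ (2*KD.βb) + (2:ℝ) ^ (3*KD.βb))) *
        (2:ℝ) ^ (min KD.αb KD.βb * (n:ℝ)) := by
    have hDe : KD.k ((2:ℝ) ^ ((n:ℝ) + 1 + p (n+1))) * KD.γ ((2:ℝ) ^ ((n:ℝ) + 1 + p (n+1))) -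
        KD.k ((2:ℝ) ^ ((n:ℝ) + p n)) * KD.γ ((2:ℝ) ^ ((n:ℝ) + 2 + p (n+2))) =
        ((KD.k ((2:ℝ) ^ ((n:ℝ) + 1 + p (n+1))) - KD.k₀) * KD.γ ((2:ℝ) ^ ((n:ℝ) + 1 + p (n+1))) -
          (KD.k ((2:ℝ) ^ ((n:ℝ) + p n)) - KD.k₀) * KD.γ ((2:ℝ) ^ ((n:ℝ) + 2 + p (n+2)))) +
        (KD.k₀ * (KD.γ ((2:ℝ) ^ ((n:ℝ) + 1 + p (n+1))) - KD.γ₀) -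
          KD.k₀ * (KD.γ ((2:ℝ) ^ ((n:ℝ) + 2 + p (n+2))) - KD.γ₀)) := by ring
    have step1 := abs_add_le
      ((KD.k ((2:ℝ) ^ ((n:ℝ) + 1 + p (n+1))) - KD.k₀) * KD.γ ((2:ℝ) ^ ((n:ℝ) + 1 + p (n+1))) -
        (KD.k ((2:ℝ) ^ ((n:ℝ) + p n)) - KD.k₀) * KD.γ ((2:ℝ) ^ ((n:ℝ) + 2 + p (n+2))))
      (KD.k₀ * (KD.γ ((2:ℝ) ^ ((n:ℝ) + 1 + p (n+1))) - KD.γ₀) -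
        KD.k₀ * (KD.γ ((2:ℝ) ^ ((n:ℝ) + 2 + p (n+2))) - KD.γ₀))
    have step2 := abs_sub
      ((KD.k ((2:ℝ) ^ ((n:ℝ) + 1 + p (n+1))) - KD.k₀) * KD.γ ((2:ℝ) ^ ((n:ℝ) + 1 + p (n+1))))
      ((KD.k ((2:ℝ) ^ ((n:ℝ) + p n)) - KD.k₀) * KD.γ ((2:ℝ) ^ ((n:ℝ) + 2 + p (n+2))))
    have step3 := abs_sub
      (KD.k₀ * (KD.γ ((2:ℝ) ^ ((n:ℝ) + 1 + p (n+1))) - KD.γ₀))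
      (KD.k₀ * (KD.γ ((2:ℝ) ^ ((n:ℝ) + 2 + p (n+2))) - KD.γ₀))
    have c1 := mul_le_mul_of_nonneg_left pu (mul_pos hCk hGm).le
    have c2 := mul_le_mul_of_nonneg_left pv_a (mul_pos hCk hGm).le
    have c3 := mul_le_mul_of_nonneg_left pv_b (mul_pos hk₀ hCg).le
    have c4 := mul_le_mul_of_nonneg_left pw (mul_pos hk₀ hCg).le
    rw [hDe]
    refine le_trans (abs_add_le _ _) ?_
    refine le_trans (add_le_add step2 step3) ?_
    refine le_trans (add_le_add (add_le_add b1 b2) (add_le_add b3 b4)) ?_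
    linarith [c1, c2, c3, c4]
  have h2pd : 2 * (2:ℝ) ^ ((n:ℝ) + p n) / (2:ℝ) ^ ((n:ℝ) + 1 + p (n+1)) ≤ 4 := by
    rw [← hpd, aux_four_eq]
    exact aux_two_rpow_le (by linarith)
  calc 2 * (2:ℝ) ^ ((n:ℝ) + p n) / (2:ℝ) ^ ((n:ℝ) + 1 + p (n+1)) *
        |KD.k ((2:ℝ) ^ ((n:ℝ) + 1 + p (n+1))) * KD.γ ((2:ℝ) ^ ((n:ℝ) + 1 + p (n+1))) -
          KD.k ((2:ℝ) ^ ((n:ℝ) + p n)) * KD.γ ((2:ℝ) ^ ((n:ℝ) + 2 + p (n+2)))| /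
        (KD.k ((2:ℝ) ^ ((n:ℝ) + p n)) * KD.γ ((2:ℝ) ^ ((n:ℝ) + 2 + p (n+2))))
      ≤ 4 * ((Ck * Gm * ((2:ℝ) ^ KD.αb + (2:ℝ) ^ (2*KD.αb)) +
          KD.k₀ * Cg * ((2:ℝ) ^ (2*KD.βb) + (2:ℝ) ^ (3*KD.βb))) *
          (2:ℝ) ^ (min KD.αb KD.βb * (n:ℝ))) / (ck * cγ) := by
        apply div_le_div₀ (by positivity)
          (mul_le_mul h2pd hDfull (abs_nonneg _) (by norm_num))
          (by positivity) (mul_le_mul hkul hγwl hcγ.le (lt_of_lt_of_le hck hkul).le)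
    _ = 4 * (Ck * Gm * ((2:ℝ) ^ KD.αb + (2:ℝ) ^ (2*KD.αb)) +
          KD.k₀ * Cg * ((2:ℝ) ^ (2*KD.βb) + (2:ℝ) ^ (3*KD.βb))) / (ck * cγ) *
          (2:ℝ) ^ (min KD.αb KD.βb * (n:ℝ)) := by ring


set_option maxHeartbeats 1600000 in
lemma zt_part4 (KD : Kernels) (δ₀ : ℝ) (hδ : 0 < δ₀ ∧ δ₀ < 1) :
    ∀ ε : ℝ, 0 < ε → ∃ N : ℤ, ∀ p : ℤ → ℝ, (∀ n, |p n| ≤ δ₀) → ∀ n : ℤ, N ≤ n →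
      |KD.thetaSeq p n / ((2:ℝ) ^ (KD.α - KD.β + 1) *
          (2:ℝ) ^ (KD.α * (p (n + 1) - p n)) *
          (2:ℝ) ^ (-(KD.β * (p (n + 2) - p (n + 1))))) - 1| ≤ ε := by
  intro ε hε
  have hε₁ : 0 < min (ε/8) (1/2) := lt_min (by linarith) (by norm_num)
  have hε₂ : 0 < min (min (ε/8) (1/2) / 4) (1/2) := lt_min (by linarith) (by norm_num)
  obtain ⟨Ξ₁, hΞ₁⟩ := tendsto_eps_form KD.hkInfty _ hε₂
  obtain ⟨Ξ₂, hΞ₂⟩ := tendsto_eps_form (gamma_ratio_tendsto KD) _ hε₂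
  obtain ⟨N, hN⟩ := aux_threshold (max Ξ₁ Ξ₂)
  refine ⟨N, fun p hp n hn => ?_⟩
  have hδ1 := hδ.2
  have hpn := abs_le.mp (hp n)
  have hpn1 := abs_le.mp (hp (n+1))
  have hpn2 := abs_le.mp (hp (n+2))
  have hL : (0:ℝ) < Real.log 2 := Real.log_pos one_lt_two
  have hupos : (0:ℝ) < (2:ℝ) ^ ((n:ℝ) + p n) := Real.rpow_pos_of_pos two_pos _
  have hvpos : (0:ℝ) < (2:ℝ) ^ ((n:ℝ) + 1 + p (n+1)) := Real.rpow_pos_of_pos two_pos _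
  have hwpos : (0:ℝ) < (2:ℝ) ^ ((n:ℝ) + 2 + p (n+2)) := Real.rpow_pos_of_pos two_pos _
  have hNn := hN n hn
  have hu1 : Ξ₁ ≤ (2:ℝ) ^ ((n:ℝ) + p n) :=
    le_trans (le_trans (le_max_left _ _) hNn) (aux_two_rpow_le (by linarith))
  have hv1 : Ξ₁ ≤ (2:ℝ) ^ ((n:ℝ) + 1 + p (n+1)) :=
    le_trans (le_trans (le_max_left _ _) hNn) (aux_two_rpow_le (by linarith))
  have hv2 : Ξ₂ ≤ (2:ℝ) ^ ((n:ℝ) + 1 + p (n+1)) :=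
    le_trans (le_trans (le_max_right _ _) hNn) (aux_two_rpow_le (by linarith))
  have hw2 : Ξ₂ ≤ (2:ℝ) ^ ((n:ℝ) + 2 + p (n+2)) :=
    le_trans (le_trans (le_max_right _ _) hNn) (aux_two_rpow_le (by linarith))
  have hQ0 : |(KD.k ((2:ℝ) ^ ((n:ℝ) + p n)) / ((2:ℝ) ^ ((n:ℝ) + p n)) ^ (KD.α + 1)) *
      (((2:ℝ) ^ ((n:ℝ) + 1 + p (n+1))) ^ KD.β / KD.γ ((2:ℝ) ^ ((n:ℝ) + 1 + p (n+1)))) - 1| ≤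
      min (ε/8) (1/2) :=
    aux_prod_close hε₁ (hΞ₁ _ hu1) (hΞ₂ _ hv2)
  have hQ1 : |(KD.k ((2:ℝ) ^ ((n:ℝ) + 1 + p (n+1))) /
        ((2:ℝ) ^ ((n:ℝ) + 1 + p (n+1))) ^ (KD.α + 1)) *
      (((2:ℝ) ^ ((n:ℝ) + 2 + p (n+2))) ^ KD.β / KD.γ ((2:ℝ) ^ ((n:ℝ) + 2 + p (n+2)))) - 1| ≤
      min (ε/8) (1/2) :=
    aux_prod_close hε₁ (hΞ₁ _ hv1) (hΞ₂ _ hw2)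
  have hQ0pos : 0 < (KD.k ((2:ℝ) ^ ((n:ℝ) + p n)) / ((2:ℝ) ^ ((n:ℝ) + p n)) ^ (KD.α + 1)) *
      (((2:ℝ) ^ ((n:ℝ) + 1 + p (n+1))) ^ KD.β / KD.γ ((2:ℝ) ^ ((n:ℝ) + 1 + p (n+1)))) :=
    mul_pos (div_pos (KD.hkpos _ hupos) (Real.rpow_pos_of_pos hupos _))
      (div_pos (Real.rpow_pos_of_pos hvpos _) (KD.hγpos _ hvpos))
  have hTc : (2:ℝ) ^ (KD.α - KD.β + 1) * (2:ℝ) ^ (KD.α * (p (n+1) - p n)) *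
      (2:ℝ) ^ (-(KD.β * (p (n+2) - p (n+1)))) =
      (2:ℝ) ^ ((KD.α - KD.β + 1) + KD.α * (p (n+1) - p n) + -(KD.β * (p (n+2) - p (n+1)))) := by
    rw [← Real.rpow_add two_pos, ← Real.rpow_add two_pos]
  have hee : (2:ℝ) ^ (KD.α * ((n:ℝ) + p n) - KD.β * ((n:ℝ) + 1 + p (n+1))) =
      2 * (2:ℝ) ^ (KD.α * ((n:ℝ) + 1 + p (n+1)) - KD.β * ((n:ℝ) + 2 + p (n+2))) /
      (2:ℝ) ^ ((KD.α - KD.β + 1) + KD.α * (p (n+1) - p n) + -(KD.β * (p (n+2) - p (n+1)))) := by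
    rw [eq_div_iff (Real.rpow_pos_of_pos two_pos _).ne', ← Real.rpow_add two_pos,
      show KD.α * ((n:ℝ) + p n) - KD.β * ((n:ℝ) + 1 + p (n+1)) +
          ((KD.α - KD.β + 1) + KD.α * (p (n+1) - p n) + -(KD.β * (p (n+2) - p (n+1)))) =
        1 + (KD.α * ((n:ℝ) + 1 + p (n+1)) - KD.β * ((n:ℝ) + 2 + p (n+2))) from by ring,
      Real.rpow_add two_pos, Real.rpow_one]
  have hθT : KD.thetaSeq p n / ((2:ℝ) ^ (KD.α - KD.β + 1) *
      (2:ℝ) ^ (KD.α * (p (n+1) - p n)) * (2:ℝ) ^ (-(KD.β * (p (n+2) - p (n+1)))))  =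
      ((KD.k ((2:ℝ) ^ ((n:ℝ) + 1 + p (n+1))) /
        ((2:ℝ) ^ ((n:ℝ) + 1 + p (n+1))) ^ (KD.α + 1)) *
      (((2:ℝ) ^ ((n:ℝ) + 2 + p (n+2))) ^ KD.β / KD.γ ((2:ℝ) ^ ((n:ℝ) + 2 + p (n+2))))) /
      ((KD.k ((2:ℝ) ^ ((n:ℝ) + p n)) / ((2:ℝ) ^ ((n:ℝ) + p n)) ^ (KD.α + 1)) *
      (((2:ℝ) ^ ((n:ℝ) + 1 + p (n+1))) ^ KD.β / KD.γ ((2:ℝ) ^ ((n:ℝ) + 1 + p (n+1))))) := by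
    simp only [Kernels.thetaSeq]
    rw [zeta_ratio_form_succ KD p n, zeta_ratio_form KD p n, hTc, hee]
    have h1 : (0:ℝ) < (2:ℝ) ^ (KD.α * ((n:ℝ) + 1 + p (n+1)) - KD.β * ((n:ℝ) + 2 + p (n+2))) :=
      Real.rpow_pos_of_pos two_pos _
    have h2 : (0:ℝ) < (2:ℝ) ^ ((KD.α - KD.β + 1) + KD.α * (p (n+1) - p n) +
        -(KD.β * (p (n+2) - p (n+1)))) := Real.rpow_pos_of_pos two_pos _
    exact aux_theta_alg hL.ne' h1.ne' h2.ne' hQ0pos.ne'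
  rw [hθT]
  exact aux_div_close hε hQ1 hQ0


/-- asymptotic behaviour of `ζ_n(p)` and `θ_n(p)` as `n → ±∞`,
uniformly over shift sequences `p` with `|p_n| ≤ δ₀`. -/
theorem zeta_theta_asymptotics (KD : Kernels) (δ₀ : ℝ) (hδ : 0 < δ₀ ∧ δ₀ < 1) :
    (∃ C : ℝ, 0 < C ∧ ∀ p : ℤ → ℝ, (∀ n, |p n| ≤ δ₀) → ∀ n : ℤ, n ≤ 0 →
      |KD.zeta p n - KD.k₀ * Real.log 2 / KD.γ₀ * (2:ℝ) ^ (-((n:ℝ) + p n))| ≤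
        C * (2:ℝ) ^ ((min KD.αb KD.βb - 1) * (n:ℝ))) ∧
    (∀ ε : ℝ, 0 < ε → ∃ N : ℤ, ∀ p : ℤ → ℝ, (∀ n, |p n| ≤ δ₀) → ∀ n : ℤ, N ≤ n →
      |KD.zeta p n / (Real.log 2 * (2:ℝ) ^ (KD.α * ((n:ℝ) + p n)) *
          (2:ℝ) ^ (-(KD.β * ((n:ℝ) + 1 + p (n + 1))))) - 1| ≤ ε) ∧
    (∃ C : ℝ, 0 < C ∧ ∀ p : ℤ → ℝ, (∀ n, |p n| ≤ δ₀) → ∀ n : ℤ, n ≤ 0 →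
      |KD.thetaSeq p n - (2:ℝ) ^ (p n - p (n + 1))| ≤
        C * (2:ℝ) ^ (min KD.αb KD.βb * (n:ℝ))) ∧
    (∀ ε : ℝ, 0 < ε → ∃ N : ℤ, ∀ p : ℤ → ℝ, (∀ n, |p n| ≤ δ₀) → ∀ n : ℤ, N ≤ n →
      |KD.thetaSeq p n / ((2:ℝ) ^ (KD.α - KD.β + 1) *
          (2:ℝ) ^ (KD.α * (p (n + 1) - p n)) *
          (2:ℝ) ^ (-(KD.β * (p (n + 2) - p (n + 1))))) - 1| ≤ ε) := by
  exact ⟨zt_part1 KD δ₀ hδ, zt_part2 KD δ₀ hδ, zt_part3 KD δ₀ hδ, zt_part4 KD δ₀ hδ⟩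
end
end

section
/- Let δ₀ ∈ (0,1) be sufficiently small, A⁰ > 0, y⁰ ∈ 𝒴₁ with ‖y⁰‖₁ ≤ δ₀, and p⁰ = (p_n⁰)_{n∈ℤ} a sequence with |p_n⁰| ≤ δ₀; define m_n⁰ := m̄_n(A⁰, p⁰)(1 + 2^{n} y_n⁰) for n ∈ ℤ. For N ∈ ℕ let p^N(0) denote the sequence with p^N_n(0) = p_n⁰ for n ≤ N and p^N_n(0) = 0 for n > N. Then for all sufficiently large N there exist A^N(0) > 0 and a sequence y^N(0) = (y^N_n(0))_{n≤N} with y^N_N(0) = 0 such that m_n⁰ = m̄_n(A^N(0), p^N(0))(1 + 2^{n} y^N_n(0)) for all n ≤ N, and moreover |A^N(0) − A⁰| ≤ c₀ 2^{−N} δ₀ and ‖y^N(0) − y⁰‖₁ ≤ c₀ δ₀ (the norm taken over n ≤ N), for a constant c₀ > 0 independent of N. -/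
open Real MeasureTheory Filter Topology Asymptotics

noncomputable section

section Helpers
open Set

/-- `Fl f x = log (f (2^x))`. -/
def Fl (f : ℝ → ℝ) (x : ℝ) : ℝ := Real.log (f ((2:ℝ) ^ x))

lemma two_rpow_pos (x : ℝ) : 0 < (2:ℝ) ^ x := Real.rpow_pos_of_pos two_pos x

lemma tendsto_two_rpow_atTop : Tendsto (fun x : ℝ => (2:ℝ) ^ x) atTop atTop := by
  simp only [Real.rpow_def_of_pos (two_pos)]
  exact Real.tendsto_exp_atTop.comp
    (Tendsto.const_mul_atTop (Real.log_pos one_lt_two) tendsto_id)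

lemma tendsto_two_rpow_atBot : Tendsto (fun x : ℝ => (2:ℝ) ^ x) atBot (𝓝[>] (0:ℝ)) := by
  apply tendsto_nhdsWithin_of_tendsto_nhds_of_eventually_within
  · simp only [Real.rpow_def_of_pos (two_pos)]
    exact Real.tendsto_exp_atBot.comp
      (Tendsto.const_mul_atBot (Real.log_pos one_lt_two) tendsto_id)
  · exact Eventually.of_forall fun x => two_rpow_pos x

lemma Fl_continuous (f : ℝ → ℝ) (hcont : ContinuousOn f (Set.Ioi 0))
    (hpos : ∀ ξ : ℝ, 0 < ξ → 0 < f ξ) : Continuous (Fl f) := by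
  rw [continuous_iff_continuousAt]
  intro x
  have h2 : Continuous (fun x : ℝ => (2:ℝ) ^ x) := by
    simp only [Real.rpow_def_of_pos (two_pos)]
    exact Real.continuous_exp.comp (continuous_const.mul continuous_id)
  have hf : ContinuousAt f ((2:ℝ) ^ x) :=
    hcont.continuousAt (Ioi_mem_nhds (two_rpow_pos x))
  exact ((Real.continuousAt_log (ne_of_gt (hpos _ (two_rpow_pos x)))).comp hf).comp
    h2.continuousAt

/-- Part A: uniform bound on differences of `Fl f` at bounded distance. -/
lemma exists_M_bound (f : ℝ → ℝ) (a f₀ : ℝ)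
    (hpos : ∀ ξ : ℝ, 0 < ξ → 0 < f ξ) (hcont : ContinuousOn f (Set.Ioi 0))
    (hInf : Tendsto (fun ξ : ℝ => f ξ / ξ ^ a) atTop (𝓝 1))
    (hZero : Tendsto f (𝓝[>] (0:ℝ)) (𝓝 f₀)) (hf₀ : 0 < f₀) (ha : 0 < a) :
    ∃ M : ℝ, 0 < M ∧ ∀ x t : ℝ, |t| ≤ 3 → |Fl f (x + t) - Fl f x| ≤ M := by
  -- ρ comparison
  set c : ℝ := a * Real.log 2 with hc
  have hcpos : 0 < c := mul_pos ha (Real.log_pos one_lt_two)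
  -- step 1 : atTop
  have step1 : Tendsto (fun x : ℝ => Fl f x - c * x) atTop (𝓝 0) := by
    have h1 : Tendsto (fun x : ℝ => f ((2:ℝ) ^ x) / ((2:ℝ) ^ x) ^ a) atTop (𝓝 1) :=
      hInf.comp tendsto_two_rpow_atTop
    have h2 := h1.log one_ne_zero
    rw [Real.log_one] at h2
    convert h2 using 2 with x
    rw [Real.log_div (ne_of_gt (hpos _ (two_rpow_pos x)))
        (ne_of_gt (Real.rpow_pos_of_pos (two_rpow_pos x) a)),
      Real.log_rpow (two_rpow_pos x), Real.log_rpow two_pos]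
    unfold Fl; ring
  have step2 : Tendsto (Fl f) atBot (𝓝 (Real.log f₀)) :=
    (hZero.comp tendsto_two_rpow_atBot).log (ne_of_gt hf₀)
  -- extract b₁
  have e1 : ∀ᶠ x : ℝ in atTop, |Fl f x - c * x| ≤ 1 := by
    have := step1.eventually (Metric.closedBall_mem_nhds (0:ℝ) one_pos)
    filter_upwards [this] with x hx
    simpa [Real.dist_eq] using hx
  obtain ⟨b₁, hb₁⟩ := eventually_atTop.1 e1
  have e2 : ∀ᶠ x : ℝ in atBot, |Fl f x - Real.log f₀| ≤ 1 := by
    have := step2.eventually (Metric.closedBall_mem_nhds (Real.log f₀) one_pos)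
    filter_upwards [this] with x hx
    simpa [Real.dist_eq] using hx
  obtain ⟨b₀, hb₀⟩ := eventually_atBot.1 e2
  set B₁ : ℝ := max b₁ 1
  set B₀ : ℝ := min b₀ 0
  obtain ⟨C, hC⟩ := (isCompact_Icc (a := B₀) (b := B₁)).exists_bound_of_continuousOn
    ((Fl_continuous f hcont hpos).continuousOn)
  -- |Fl f x - c * max x 0| ≤ M₁ for all x
  set M₁ : ℝ := max (1 + |Real.log f₀|) (max (C + c * B₁) 1)
  have key : ∀ x : ℝ, |Fl f x - c * max x 0| ≤ M₁ := by
    intro x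
    rcases le_or_gt x B₀ with h | h
    · have hx0 : max x 0 = 0 := max_eq_right (h.trans (min_le_right _ _))
      rw [hx0, mul_zero, sub_zero]
      calc |Fl f x| ≤ |Fl f x - Real.log f₀| + |Real.log f₀| := by
              simpa using abs_add_le (Fl f x - Real.log f₀) (Real.log f₀)
        _ ≤ 1 + |Real.log f₀| := by
              have := hb₀ x (h.trans (min_le_left _ _)); linarith
        _ ≤ M₁ := le_max_left _ _
    · rcases le_or_gt x B₁ with h' | h'
      · have hmem : x ∈ Icc B₀ B₁ := ⟨h.le, h'⟩
        have h1 := hC x hmem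
        rw [Real.norm_eq_abs] at h1
        have h2 : |c * max x 0| ≤ c * B₁ := by
          rw [abs_mul, abs_of_pos hcpos]
          refine mul_le_mul_of_nonneg_left ?_ hcpos.le
          rw [abs_of_nonneg (le_max_right _ _)]
          exact max_le h' (le_trans one_pos.le (le_max_right b₁ 1))
        calc |Fl f x - c * max x 0| ≤ |Fl f x| + |c * max x 0| := abs_sub _ _
          _ ≤ C + c * B₁ := add_le_add h1 h2
          _ ≤ M₁ := le_trans (le_max_left _ _) (le_max_right _ _)
      · have hx0 : max x 0 = x :=
          max_eq_left (le_trans (le_trans one_pos.le (le_max_right b₁ 1)) h'.le)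
        rw [hx0]
        have := hb₁ x (le_trans (le_max_left b₁ 1) h'.le)
        exact this.trans (le_trans (le_max_right _ _) (le_max_right _ _))
  refine ⟨2 * M₁ + 3 * c, by positivity, fun x t ht => ?_⟩
  have lip : |c * max (x + t) 0 - c * max x 0| ≤ 3 * c := by
    rw [← mul_sub, abs_mul, abs_of_pos hcpos]
    calc c * |max (x + t) 0 - max x 0| ≤ c * |x + t - x| :=
          mul_le_mul_of_nonneg_left (abs_max_sub_max_le_abs _ _ _) hcpos.le
      _ = c * |t| := by ring_nf
      _ ≤ c * 3 := mul_le_mul_of_nonneg_left ht hcpos.le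
      _ = 3 * c := by ring
  have k2' : |c * max x 0 - Fl f x| ≤ M₁ := by rw [abs_sub_comm]; exact key x
  have h1 := abs_sub_le (Fl f (x + t)) (c * max (x + t) 0) (Fl f x)
  have h2 := abs_sub_le (c * max (x + t) 0) (c * max x 0) (Fl f x)
  have k1 := key (x + t)
  linarith


def Fl' (f : ℝ → ℝ) (x : ℝ) : ℝ := Real.log (f ((2:ℝ) ^ x))

lemma two_rpow_pos' (x : ℝ) : 0 < (2:ℝ) ^ x := Real.rpow_pos_of_pos two_pos x

lemma tendsto_two_rpow_atTop' : Tendsto (fun x : ℝ => (2:ℝ) ^ x) atTop atTop := by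
  simp only [Real.rpow_def_of_pos (two_pos)]
  exact Real.tendsto_exp_atTop.comp
    (Tendsto.const_mul_atTop (Real.log_pos one_lt_two) tendsto_id)

/-- Part B : Lipschitz bound near `+∞`. -/
lemma exists_Lip (f : ℝ → ℝ) (a c₁ : ℝ)
    (hC2 : ContDiffOn ℝ 2 f (Set.Ioi 0)) (hpos : ∀ ξ : ℝ, 0 < ξ → 0 < f ξ)
    (hInf : Tendsto (fun ξ : ℝ => f ξ / ξ ^ a) atTop (𝓝 1))
    (h' : ∀ ξ : ℝ, 1 ≤ ξ → |deriv f ξ| ≤ c₁ * ξ ^ (a - 1)) (hc₁ : 0 < c₁) :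
    ∃ C x₀ : ℝ, 0 < C ∧ 1 ≤ x₀ ∧
      ∀ x y : ℝ, x₀ ≤ x → x₀ ≤ y → |Fl' f x - Fl' f y| ≤ C * |x - y| := by
  -- lower bound f ξ ≥ (1/2) ξ^a eventually
  have elow : ∀ᶠ ξ : ℝ in atTop, (1/2 : ℝ) * ξ ^ a ≤ f ξ := by
    have h1 : ∀ᶠ ξ : ℝ in atTop, (1/2 : ℝ) ≤ f ξ / ξ ^ a :=
      hInf.eventually (eventually_ge_nhds (by norm_num))
    filter_upwards [h1, eventually_gt_atTop (0:ℝ)] with ξ h hξ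
    have hpa : (0:ℝ) < ξ ^ a := Real.rpow_pos_of_pos hξ a
    rw [le_div_iff₀ hpa] at h
    linarith
  obtain ⟨ξ₁', hξ₁'⟩ := eventually_atTop.1 elow
  set ξ₁ : ℝ := max ξ₁' 1 with hξ₁def
  have hξ₁one : (1:ℝ) ≤ ξ₁ := le_max_right _ _
  have hlow : ∀ ξ : ℝ, ξ₁ ≤ ξ → (1/2 : ℝ) * ξ ^ a ≤ f ξ :=
    fun ξ hξ => hξ₁' ξ ((le_max_left _ _).trans hξ)
  set x₀ : ℝ := max 1 (Real.logb 2 ξ₁) with hx₀def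
  have hx₀one : (1:ℝ) ≤ x₀ := le_max_left _ _
  have hx₀ : ∀ x : ℝ, x₀ ≤ x → ξ₁ ≤ (2:ℝ) ^ x := by
    intro x hx
    have : (2:ℝ) ^ Real.logb 2 ξ₁ ≤ (2:ℝ) ^ x :=
      Real.rpow_le_rpow_left_iff one_lt_two |>.2 ((le_max_right _ _).trans hx)
    rwa [Real.rpow_logb two_pos (by norm_num) (lt_of_lt_of_le one_pos hξ₁one)] at this
  set C : ℝ := 2 * c₁ * Real.log 2 with hCdef
  have hCpos : 0 < C := by positivity
  refine ⟨C, x₀, hCpos, hx₀one, ?_⟩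
  -- derivative of Fl' f
  have hD : ∀ x : ℝ, HasDerivAt (Fl' f)
      ((f ((2:ℝ) ^ x))⁻¹ * (deriv f ((2:ℝ) ^ x) * ((2:ℝ) ^ x * Real.log 2))) x := by
    intro x
    have h2 : HasDerivAt (fun x : ℝ => (2:ℝ) ^ x) ((2:ℝ) ^ x * Real.log 2) x :=
      (Real.hasStrictDerivAt_const_rpow two_pos x).hasDerivAt
    have hf : HasDerivAt f (deriv f ((2:ℝ) ^ x)) ((2:ℝ) ^ x) :=
      ((hC2.differentiableOn (by norm_num)).differentiableAt
        (Ioi_mem_nhds (two_rpow_pos' x))).hasDerivAt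
    have hcomp := hf.comp x h2
    have hlog := (Real.hasDerivAt_log (ne_of_gt (hpos _ (two_rpow_pos' x)))).comp x hcomp
    rw [show Fl' f = fun x => Real.log (f ((2:ℝ) ^ x)) from rfl]
    simpa [Function.comp_def, mul_comm, mul_assoc, mul_left_comm] using hlog
  -- bound on the derivative for x ≥ x₀
  have hbound : ∀ x : ℝ, x ∈ Ici x₀ →
      ‖(f ((2:ℝ) ^ x))⁻¹ * (deriv f ((2:ℝ) ^ x) * ((2:ℝ) ^ x * Real.log 2))‖ ≤ C := by
    intro x hx
    set ξ : ℝ := (2:ℝ) ^ x with hξdef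
    have hξ₁le : ξ₁ ≤ ξ := hx₀ x hx
    have hξ1 : (1:ℝ) ≤ ξ := hξ₁one.trans hξ₁le
    have hξpos : (0:ℝ) < ξ := lt_of_lt_of_le one_pos hξ1
    have hfl : (1/2 : ℝ) * ξ ^ a ≤ f ξ := hlow ξ hξ₁le
    have hfpos : 0 < f ξ := hpos ξ hξpos
    have hpa : (0:ℝ) < ξ ^ a := Real.rpow_pos_of_pos hξpos a
    have hd := h' ξ hξ1
    have e1 : ξ ^ (a - 1) = ξ ^ a / ξ := by rw [Real.rpow_sub hξpos, Real.rpow_one]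
    have hdb : |deriv f ξ| ≤ c₁ * (ξ ^ a / ξ) := by rw [e1] at hd; exact hd
    have hinv : (f ξ)⁻¹ ≤ 2 / ξ ^ a := by
      rw [div_eq_mul_inv]
      have h2 := one_div_le_one_div_of_le (by positivity : (0:ℝ) < 1/2 * ξ ^ a) hfl
      rw [one_div, one_div] at h2
      calc (f ξ)⁻¹ ≤ (1/2 * ξ ^ a)⁻¹ := h2
        _ = 2 * (ξ ^ a)⁻¹ := by rw [mul_inv]; norm_num
    have hlog2 : (0:ℝ) < Real.log 2 := Real.log_pos one_lt_two
    have heq : ‖(f ξ)⁻¹ * (deriv f ξ * (ξ * Real.log 2))‖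
        = (f ξ)⁻¹ * (|deriv f ξ| * (ξ * Real.log 2)) := by
      rw [Real.norm_eq_abs, abs_mul, abs_mul, abs_mul,
        abs_of_pos (inv_pos.2 hfpos), abs_of_pos hξpos, abs_of_pos hlog2]
    rw [heq]
    calc (f ξ)⁻¹ * (|deriv f ξ| * (ξ * Real.log 2))
        ≤ (2 / ξ ^ a) * ((c₁ * (ξ ^ a / ξ)) * (ξ * Real.log 2)) := by
          apply mul_le_mul hinv _ (by positivity) (by positivity)
          exact mul_le_mul_of_nonneg_right hdb (by positivity)
      _ = C := by rw [hCdef]; field_simp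
  intro x y hx hy
  have := Convex.norm_image_sub_le_of_norm_hasDerivWithin_le
    (f := Fl' f) (s := Ici x₀) (C := C)
    (fun z hz => (hD z).hasDerivWithinAt) hbound (convex_Ici x₀) hy hx
  simpa [Real.norm_eq_abs] using this


lemma weight_eq (n : ℝ) (j : ℕ) :
    (2:ℝ) ^ (-(n + 1 + (j:ℝ))) = (2:ℝ) ^ (-(n+1)) * (1/2:ℝ) ^ j := by
  rw [show (-(n + 1 + (j:ℝ))) = (-(n+1)) + (-(j:ℝ)) by ring, Real.rpow_add two_pos]
  congr 1
  rw [Real.rpow_neg (by norm_num : (0:ℝ) ≤ 2), Real.rpow_natCast, ← inv_pow]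
  norm_num

lemma summable_weight (n : ℝ) (u : ℕ → ℝ) (M : ℝ)
    (hu : ∀ j, |u j| ≤ M) :
    Summable (fun j : ℕ => (2:ℝ) ^ (-(n + 1 + (j:ℝ))) * u j) := by
  apply Summable.of_norm_bounded (g := fun j : ℕ => ((2:ℝ) ^ (-(n+1)) * M) * (1/2:ℝ) ^ j)
  · exact (summable_geometric_of_lt_one (by norm_num) (by norm_num)).mul_left _
  · intro j
    rw [Real.norm_eq_abs, abs_mul, weight_eq, abs_mul]
    rw [abs_of_pos (Real.rpow_pos_of_pos two_pos _), abs_of_pos (by positivity : (0:ℝ) < (1/2:ℝ)^j)]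
    calc (2:ℝ) ^ (-(n+1)) * (1/2:ℝ) ^ j * |u j| ≤ (2:ℝ) ^ (-(n+1)) * (1/2:ℝ) ^ j * M := by
          apply mul_le_mul_of_nonneg_left (hu j) (by positivity)
      _ = (2:ℝ) ^ (-(n+1)) * M * (1/2:ℝ) ^ j := by ring

lemma tsum_weight_diff (n : ℝ) (u v : ℕ → ℝ) (M ε : ℝ)
    (hu : ∀ j, |u j| ≤ M) (hv : ∀ j, |v j| ≤ M) (hd : ∀ j, |u j - v j| ≤ ε) :
    |(2:ℝ)^n * ((∑' j:ℕ, (2:ℝ)^(-(n+1+(j:ℝ))) * u j) - ∑' j:ℕ, (2:ℝ)^(-(n+1+(j:ℝ))) * v j)| ≤ ε := by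
  have hεnn : 0 ≤ ε := le_trans (abs_nonneg _) (hd 0)
  have hsu := summable_weight n u M hu
  have hsv := summable_weight n v M hv
  rw [← Summable.tsum_sub hsu hsv]
  have hkey : ∀ j : ℕ, (2:ℝ)^(-(n+1+(j:ℝ))) * u j - (2:ℝ)^(-(n+1+(j:ℝ))) * v j
      = (2:ℝ)^(-(n+1+(j:ℝ))) * (u j - v j) := fun j => by ring
  simp only [hkey]
  have hsd : Summable (fun j : ℕ => (2:ℝ)^(-(n+1+(j:ℝ))) * (u j - v j)) :=
    summable_weight n _ ε hd
  have habs : |∑' j:ℕ, (2:ℝ)^(-(n+1+(j:ℝ))) * (u j - v j)|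
      ≤ ∑' j:ℕ, (2:ℝ)^(-(n+1+(j:ℝ))) * ε := by
    have h1 : (Summable fun j : ℕ => ‖(2:ℝ)^(-(n+1+(j:ℝ))) * (u j - v j)‖) := by
      rw [summable_norm_iff]; exact hsd
    refine le_trans (norm_tsum_le_tsum_norm h1) (Summable.tsum_le_tsum ?_ h1 ?_)
    · intro j
      rw [Real.norm_eq_abs, abs_mul, abs_of_pos (Real.rpow_pos_of_pos two_pos _)]
      exact mul_le_mul_of_nonneg_left (hd j) (le_of_lt (Real.rpow_pos_of_pos two_pos _))
    · exact summable_weight n (fun _ => ε) ε (fun _ => le_of_eq (abs_of_nonneg hεnn))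
  have hval : ∑' j:ℕ, (2:ℝ)^(-(n+1+(j:ℝ))) * ε = (2:ℝ)^(-n) * ε := by
    calc ∑' j:ℕ, (2:ℝ)^(-(n+1+(j:ℝ))) * ε
        = ∑' j:ℕ, ((2:ℝ)^(-(n+1)) * ε) * (1/2:ℝ)^j := by
          apply tsum_congr; intro j; rw [weight_eq]; ring
      _ = ((2:ℝ)^(-(n+1)) * ε) * ∑' j:ℕ, (1/2:ℝ)^j := tsum_mul_left
      _ = ((2:ℝ)^(-(n+1)) * ε) * 2 := by
          rw [tsum_geometric_of_lt_one (by norm_num) (by norm_num)]; norm_num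
      _ = (2:ℝ)^(-n) * ε := by
          rw [show (-(n:ℝ)) = -(n+1)+1 by ring, Real.rpow_add two_pos, Real.rpow_one]; ring
  rw [abs_mul, abs_of_pos (Real.rpow_pos_of_pos two_pos n)]
  calc (2:ℝ)^n * |∑' j:ℕ, (2:ℝ)^(-(n+1+(j:ℝ))) * (u j - v j)|
      ≤ (2:ℝ)^n * ((2:ℝ)^(-n) * ε) := by
        apply mul_le_mul_of_nonneg_left (habs.trans hval.le)
          (le_of_lt (Real.rpow_pos_of_pos two_pos n))
    _ = ε := by
        rw [← mul_assoc, ← Real.rpow_add two_pos, add_neg_cancel, Real.rpow_zero, one_mul]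

lemma abs_log_one_add_le {u : ℝ} (h : |u| ≤ 1/2) : |Real.log (1 + u)| ≤ 2 * |u| := by
  have hb := abs_le.1 h
  have h1 : 0 < 1 + u := by linarith
  have hup : Real.log (1 + u) ≤ u := by
    have := Real.log_le_sub_one_of_pos h1
    linarith
  have hlow : -Real.log (1 + u) ≤ 2 * |u| := by
    have h2 : 0 < (1 + u)⁻¹ := inv_pos.2 h1
    have h3 := Real.log_le_sub_one_of_pos h2
    rw [Real.log_inv] at h3
    have h4 : (1 + u)⁻¹ ≤ 2 := by
      rw [inv_le_comm₀ h1 two_pos]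
      linarith
    have h5 : (1 + u)⁻¹ - 1 ≤ 2 * |u| := by
      rcases le_or_gt 0 u with hu | hu
      · have : (1 + u)⁻¹ ≤ 1 := by
          rw [inv_le_one_iff₀]; right; linarith
        have := abs_nonneg u; linarith
      · have hau : |u| = -u := abs_of_neg hu
        have : (1 + u)⁻¹ - 1 = -u * (1 + u)⁻¹ := by field_simp; ring
        rw [this, hau]
        nlinarith
    linarith
  rw [abs_le]
  constructor
  · linarith
  · linarith [le_abs_self u]

lemma of_Ynorm_le {y : ℤ → ℝ} {δ : ℝ} (hδ : 0 ≤ δ)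
    (h : Ynorm 1 y ≤ ENNReal.ofReal δ) (n : ℤ) : (2:ℝ)^(n:ℝ) * |y n| ≤ δ := by
  rcases le_or_gt n 0 with hn | hn
  · have h1 : ENNReal.ofReal ((2:ℝ)^((n:ℝ)) * |y n|) ≤ Ynorm 1 y := by
      unfold Ynorm
      exact le_trans (le_iSup (fun m : {m : ℤ // m ≤ 0} =>
        ENNReal.ofReal ((2:ℝ)^((m.1:ℝ)) * |y m.1|)) ⟨n, hn⟩) le_self_add
    exact (ENNReal.ofReal_le_ofReal_iff hδ).1 (h1.trans h)
  · have h1 : ENNReal.ofReal ((2:ℝ)^((1:ℝ) * (n:ℝ)) * |y n|) ≤ Ynorm 1 y := by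
      unfold Ynorm
      exact le_trans (le_iSup (fun m : {m : ℤ // 0 < m} =>
        ENNReal.ofReal ((2:ℝ)^((1:ℝ) * (m.1:ℝ)) * |y m.1|)) ⟨n, hn⟩) le_add_self
    rw [one_mul] at h1
    exact (ENNReal.ofReal_le_ofReal_iff hδ).1 (h1.trans h)

lemma Ynorm_le_of {y : ℤ → ℝ} {K : ℝ} (hK : 0 ≤ K)
    (h : ∀ n : ℤ, (2:ℝ)^(n:ℝ) * |y n| ≤ K) : Ynorm 1 y ≤ ENNReal.ofReal (2 * K) := by
  unfold Ynorm
  have h1 : (⨆ n : {m : ℤ // m ≤ 0}, ENNReal.ofReal ((2:ℝ)^((n.1:ℝ)) * |y n.1|))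
      ≤ ENNReal.ofReal K := iSup_le fun n => ENNReal.ofReal_le_ofReal (h n.1)
  have h2 : (⨆ n : {m : ℤ // 0 < m}, ENNReal.ofReal ((2:ℝ)^((1:ℝ) * (n.1:ℝ)) * |y n.1|))
      ≤ ENNReal.ofReal K := by
    apply iSup_le
    intro n
    rw [one_mul]
    exact ENNReal.ofReal_le_ofReal (h n.1)
  calc _ ≤ ENNReal.ofReal K + ENNReal.ofReal K := add_le_add h1 h2
    _ = ENNReal.ofReal (2 * K) := by rw [← ENNReal.ofReal_add hK hK]; ring_nf

namespace Kernels
variable (KD : Kernels)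

def Fl (f : ℝ → ℝ) (x : ℝ) : ℝ := Real.log (f ((2:ℝ) ^ x))

lemma two_rpow_pos (x : ℝ) : 0 < (2:ℝ) ^ x := Real.rpow_pos_of_pos two_pos x

lemma zeta_pos (p : ℤ → ℝ) (n : ℤ) : 0 < KD.zeta p n := by
  unfold Kernels.zeta
  have h1 : 0 < Real.log 2 := Real.log_pos one_lt_two
  have h2 := two_rpow_pos (-((n:ℝ) + p n))
  have h3 := KD.hkpos _ (two_rpow_pos ((n:ℝ) + p n))
  have h4 := KD.hγpos _ (two_rpow_pos ((n:ℝ) + 1 + p (n + 1)))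
  positivity

lemma log_zeta (p : ℤ → ℝ) (n : ℤ) :
    Real.log (KD.zeta p n) = Real.log (Real.log 2) - ((n:ℝ) + p n) * Real.log 2
      + Fl KD.k ((n:ℝ) + p n) - Fl KD.γ ((n:ℝ) + 1 + p (n + 1)) := by
  unfold Kernels.zeta Fl
  have h1 : Real.log 2 ≠ 0 := ne_of_gt (Real.log_pos one_lt_two)
  have h2 : (2:ℝ) ^ (-((n:ℝ) + p n)) ≠ 0 := ne_of_gt (two_rpow_pos _)
  have h3 : KD.k ((2:ℝ) ^ ((n:ℝ) + p n)) ≠ 0 := ne_of_gt (KD.hkpos _ (two_rpow_pos _))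
  have h4 : KD.γ ((2:ℝ) ^ ((n:ℝ) + 1 + p (n + 1))) ≠ 0 :=
    ne_of_gt (KD.hγpos _ (two_rpow_pos _))
  rw [Real.log_div (by exact mul_ne_zero (mul_ne_zero h1 h2) h3) h4,
    Real.log_mul (mul_ne_zero h1 h2) h3, Real.log_mul h1 h2,
    Real.log_rpow two_pos]
  ring_nf

lemma theta_pos (p : ℤ → ℝ) (n : ℤ) : 0 < KD.thetaSeq p n := by
  unfold Kernels.thetaSeq
  have h1 := KD.zeta_pos p (n + 1)
  have h2 := KD.zeta_pos p n
  positivity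

lemma log_theta (p : ℤ → ℝ) (n : ℤ) :
    Real.log (KD.thetaSeq p n) = Real.log 2 * (p n - p (n + 1))
      + (Fl KD.k ((n:ℝ) + 1 + p (n + 1)) - Fl KD.k ((n:ℝ) + p n))
      - (Fl KD.γ ((n:ℝ) + 2 + p (n + 2)) - Fl KD.γ ((n:ℝ) + 1 + p (n + 1))) := by
  unfold Kernels.thetaSeq
  rw [mul_div_assoc, Real.log_mul two_ne_zero
    (ne_of_gt (div_pos (KD.zeta_pos p (n+1)) (KD.zeta_pos p n))),
    Real.log_div (ne_of_gt (KD.zeta_pos p (n+1))) (ne_of_gt (KD.zeta_pos p n)),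
    KD.log_zeta p (n+1), KD.log_zeta p n]
  have e2 : (n + 1 + 1 : ℤ) = n + 2 := by ring
  rw [e2]
  push_cast
  ring_nf


/-- Tail sum in `mubar`. -/
def Sv (p : ℤ → ℝ) (n : ℤ) : ℝ :=
  ∑' j : ℕ, (2:ℝ) ^ (-((n:ℝ) + 1 + (j:ℝ))) * Real.log (KD.thetaSeq p (n + (j:ℤ)))

lemma mubar_eq (A : ℝ) (p : ℤ → ℝ) (n : ℤ) :
    KD.mubar A p n = Real.exp (-A * (2:ℝ)^(n:ℝ) - (2:ℝ)^(n:ℝ) * KD.Sv p n) := by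
  unfold Kernels.mubar Sv
  rw [← Real.exp_add]
  congr 1
  ring

lemma mubar_pos (A : ℝ) (p : ℤ → ℝ) (n : ℤ) : 0 < KD.mubar A p n := by
  unfold Kernels.mubar; positivity

lemma mbar_pos (A : ℝ) (p : ℤ → ℝ) (n : ℤ) : 0 < KD.mbar A p n := by
  unfold Kernels.mbar
  exact div_pos (by have := KD.mubar_pos A p n; linarith) (KD.zeta_pos p n)

lemma mbar_exp (A : ℝ) (p : ℤ → ℝ) (n : ℤ) :
    KD.mbar A p n = Real.exp (Real.log 2 + (-A * (2:ℝ)^(n:ℝ) - (2:ℝ)^(n:ℝ) * KD.Sv p n)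
      - Real.log (KD.zeta p n)) := by
  rw [← Real.exp_log (KD.mbar_pos A p n)]
  congr 1
  unfold Kernels.mbar
  rw [KD.mubar_eq, Real.log_div (by positivity) (ne_of_gt (KD.zeta_pos p n)),
    Real.log_mul two_ne_zero (Real.exp_ne_zero _), Real.log_exp]

lemma mbar_ratio (A0 AN : ℝ) (p0 pN : ℤ → ℝ) (n : ℤ) :
    KD.mbar A0 p0 n / KD.mbar AN pN n =
      Real.exp ((AN - A0) * (2:ℝ)^(n:ℝ) + (2:ℝ)^(n:ℝ) * (KD.Sv pN n - KD.Sv p0 n)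
        + Real.log (KD.zeta pN n) - Real.log (KD.zeta p0 n)) := by
  rw [KD.mbar_exp, KD.mbar_exp, ← Real.exp_sub]
  congr 1
  ring

lemma abs_log_theta_le (Mk Mγ : ℝ)
    (hMk : ∀ x t : ℝ, |t| ≤ 3 → |Fl KD.k (x + t) - Fl KD.k x| ≤ Mk)
    (hMγ : ∀ x t : ℝ, |t| ≤ 3 → |Fl KD.γ (x + t) - Fl KD.γ x| ≤ Mγ)
    (p : ℤ → ℝ) (hp : ∀ m : ℤ, |p m| ≤ 1) (m : ℤ) :
    |Real.log (KD.thetaSeq p m)| ≤ 2 * Real.log 2 + Mk + Mγ := by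
  rw [KD.log_theta]
  have l2 : (0:ℝ) < Real.log 2 := Real.log_pos one_lt_two
  have t1 : |Real.log 2 * (p m - p (m + 1))| ≤ 2 * Real.log 2 := by
    rw [abs_mul, abs_of_pos l2]
    have := abs_sub (p m) (p (m+1))
    have h1 := hp m; have h2 := hp (m+1)
    nlinarith
  have t2 : |Fl KD.k ((m:ℝ) + 1 + p (m + 1)) - Fl KD.k ((m:ℝ) + p m)| ≤ Mk := by
    have e : (m:ℝ) + 1 + p (m + 1) = ((m:ℝ) + p m) + (1 + p (m + 1) - p m) := by ring
    rw [e]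
    apply hMk
    have h1 := hp m; have h2 := hp (m+1)
    have := abs_add_le (1 + p (m+1)) (-(p m))
    have := abs_add_le (1:ℝ) (p (m+1))
    simp only [abs_neg] at *
    calc |1 + p (m+1) - p m| ≤ |1 + p (m+1)| + |p m| := abs_sub _ _
      _ ≤ 1 + |p (m+1)| + |p m| := by
          have := abs_add_le (1:ℝ) (p (m+1)); simp at this; linarith
      _ ≤ 3 := by linarith
  have t3 : |Fl KD.γ ((m:ℝ) + 2 + p (m + 2)) - Fl KD.γ ((m:ℝ) + 1 + p (m + 1))| ≤ Mγ := by
    have e : (m:ℝ) + 2 + p (m + 2) = ((m:ℝ) + 1 + p (m + 1)) + (1 + p (m + 2) - p (m + 1)) := by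
      ring
    rw [e]
    apply hMγ
    have h1 := hp (m+1); have h2 := hp (m+2)
    calc |1 + p (m+2) - p (m+1)| ≤ |1 + p (m+2)| + |p (m+1)| := abs_sub _ _
      _ ≤ 1 + |p (m+2)| + |p (m+1)| := by
          have := abs_add_le (1:ℝ) (p (m+2)); simp at this; linarith
      _ ≤ 3 := by linarith
  set T1 := Real.log 2 * (p m - p (m + 1))
  set T2 := Fl KD.k ((m:ℝ) + 1 + p (m + 1)) - Fl KD.k ((m:ℝ) + p m)
  set T3 := Fl KD.γ ((m:ℝ) + 2 + p (m + 2)) - Fl KD.γ ((m:ℝ) + 1 + p (m + 1))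
  have u1 := le_abs_self T1; have v1 := neg_abs_le T1
  have u2 := le_abs_self T2; have v2 := neg_abs_le T2
  have u3 := le_abs_self T3; have v3 := neg_abs_le T3
  rw [abs_le]; constructor <;> linarith


lemma log_zeta_sub (Cγ x₀ δ₀ : ℝ) (N : ℕ)
    (hLγ : ∀ x y : ℝ, x₀ ≤ x → x₀ ≤ y → |Fl KD.γ x - Fl KD.γ y| ≤ Cγ * |x - y|)
    (hCγ : 0 ≤ Cγ) (hδ : 0 ≤ δ₀)
    (p0 pN : ℤ → ℝ)
    (hagree : ∀ i : ℤ, i ≤ (N:ℤ) → p0 i = pN i)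
    (hdiff : ∀ i : ℤ, |p0 i - pN i| ≤ δ₀)
    (hsmall : ∀ i : ℤ, |p0 i| ≤ 1) (hsmallN : ∀ i : ℤ, |pN i| ≤ 1)
    (hbig : x₀ + 2 ≤ (N:ℝ)) (n : ℤ) (hn : n ≤ (N:ℤ)) :
    |Real.log (KD.zeta p0 n) - Real.log (KD.zeta pN n)| ≤ Cγ * δ₀ := by
  rw [KD.log_zeta, KD.log_zeta, hagree n hn]
  have key : Real.log (Real.log 2) - ((n:ℝ) + pN n) * Real.log 2 + Fl KD.k ((n:ℝ) + pN n)
        - Fl KD.γ ((n:ℝ) + 1 + p0 (n + 1))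
      - (Real.log (Real.log 2) - ((n:ℝ) + pN n) * Real.log 2 + Fl KD.k ((n:ℝ) + pN n)
        - Fl KD.γ ((n:ℝ) + 1 + pN (n + 1)))
      = -(Fl KD.γ ((n:ℝ) + 1 + p0 (n + 1)) - Fl KD.γ ((n:ℝ) + 1 + pN (n + 1))) := by ring
  rw [key, abs_neg]
  by_cases hn1 : n + 1 ≤ (N:ℤ)
  · rw [hagree (n+1) hn1, sub_self, abs_zero]
    positivity
  · have hnN : n = (N:ℤ) := by omega
    subst hnN
    have hc : ((N:ℤ):ℝ) = (N:ℝ) := by push_cast; ring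
    have b0 := abs_le.1 (hsmall ((N:ℤ) + 1))
    have bN := abs_le.1 (hsmallN ((N:ℤ) + 1))
    have h1 : x₀ ≤ ((N:ℤ):ℝ) + 1 + p0 ((N:ℤ) + 1) := by rw [hc]; linarith [b0.1]
    have h2 : x₀ ≤ ((N:ℤ):ℝ) + 1 + pN ((N:ℤ) + 1) := by rw [hc]; linarith [bN.1]
    have := hLγ _ _ h1 h2
    have e : (((N:ℤ):ℝ) + 1 + p0 ((N:ℤ) + 1)) - (((N:ℤ):ℝ) + 1 + pN ((N:ℤ) + 1))
        = p0 ((N:ℤ) + 1) - pN ((N:ℤ) + 1) := by ring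
    rw [e] at this
    exact this.trans (mul_le_mul_of_nonneg_left (hdiff _) hCγ)

lemma log_theta_sub (CL Cγ x₀ δ₀ : ℝ) (N : ℕ)
    (hLk : ∀ x y : ℝ, x₀ ≤ x → x₀ ≤ y → |Fl KD.k x - Fl KD.k y| ≤ CL * |x - y|)
    (hLγ : ∀ x y : ℝ, x₀ ≤ x → x₀ ≤ y → |Fl KD.γ x - Fl KD.γ y| ≤ Cγ * |x - y|)
    (hCL : 0 ≤ CL) (hCγ : 0 ≤ Cγ) (hδ : 0 ≤ δ₀)
    (p0 pN : ℤ → ℝ)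
    (hagree : ∀ i : ℤ, i ≤ (N:ℤ) → p0 i = pN i)
    (hdiff : ∀ i : ℤ, |p0 i - pN i| ≤ δ₀)
    (hsmall : ∀ i : ℤ, |p0 i| ≤ 1) (hsmallN : ∀ i : ℤ, |pN i| ≤ 1)
    (hbig : x₀ + 2 ≤ (N:ℝ)) (m : ℤ) :
    |Real.log (KD.thetaSeq p0 m) - Real.log (KD.thetaSeq pN m)|
      ≤ (2 * Real.log 2 + 2 * CL + 2 * Cγ) * δ₀ := by
  have l2 : (0:ℝ) < Real.log 2 := Real.log_pos one_lt_two
  by_cases hm : m + 2 ≤ (N:ℤ)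
  · rw [KD.log_theta, KD.log_theta, hagree m (by omega), hagree (m+1) (by omega),
      hagree (m+2) (by omega), sub_self, abs_zero]
    positivity
  · have hm' : (N:ℝ) - 1 ≤ (m:ℝ) := by
      have : (N:ℤ) ≤ m + 1 := by omega
      have h2 : ((N:ℤ):ℝ) ≤ ((m + 1 : ℤ):ℝ) := Int.cast_le.2 this
      push_cast at h2
      linarith
    have hx1 : ∀ r : ℝ, |r| ≤ 1 → x₀ ≤ (m:ℝ) + r := by
      intro r hr; have := abs_le.1 hr; linarith
    have hx2 : ∀ r : ℝ, |r| ≤ 1 → x₀ ≤ (m:ℝ) + 1 + r := by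
      intro r hr; have := abs_le.1 hr; linarith
    have hx3 : ∀ r : ℝ, |r| ≤ 1 → x₀ ≤ (m:ℝ) + 2 + r := by
      intro r hr; have := abs_le.1 hr; linarith
    have bk1 : |Fl KD.k ((m:ℝ) + p0 m) - Fl KD.k ((m:ℝ) + pN m)| ≤ CL * δ₀ := by
      have h := hLk _ _ (hx1 _ (hsmall m)) (hx1 _ (hsmallN m))
      have e : ((m:ℝ) + p0 m) - ((m:ℝ) + pN m) = p0 m - pN m := by ring
      rw [e] at h
      exact h.trans (mul_le_mul_of_nonneg_left (hdiff m) hCL)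
    have bk2 : |Fl KD.k ((m:ℝ) + 1 + p0 (m+1)) - Fl KD.k ((m:ℝ) + 1 + pN (m+1))| ≤ CL * δ₀ := by
      have h := hLk _ _ (hx2 _ (hsmall (m+1))) (hx2 _ (hsmallN (m+1)))
      have e : ((m:ℝ) + 1 + p0 (m+1)) - ((m:ℝ) + 1 + pN (m+1)) = p0 (m+1) - pN (m+1) := by ring
      rw [e] at h
      exact h.trans (mul_le_mul_of_nonneg_left (hdiff _) hCL)
    have bγ1 : |Fl KD.γ ((m:ℝ) + 1 + p0 (m+1)) - Fl KD.γ ((m:ℝ) + 1 + pN (m+1))| ≤ Cγ * δ₀ := by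
      have h := hLγ _ _ (hx2 _ (hsmall (m+1))) (hx2 _ (hsmallN (m+1)))
      have e : ((m:ℝ) + 1 + p0 (m+1)) - ((m:ℝ) + 1 + pN (m+1)) = p0 (m+1) - pN (m+1) := by ring
      rw [e] at h
      exact h.trans (mul_le_mul_of_nonneg_left (hdiff _) hCγ)
    have bγ2 : |Fl KD.γ ((m:ℝ) + 2 + p0 (m+2)) - Fl KD.γ ((m:ℝ) + 2 + pN (m+2))| ≤ Cγ * δ₀ := by
      have h := hLγ _ _ (hx3 _ (hsmall (m+2))) (hx3 _ (hsmallN (m+2)))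
      have e : ((m:ℝ) + 2 + p0 (m+2)) - ((m:ℝ) + 2 + pN (m+2)) = p0 (m+2) - pN (m+2) := by ring
      rw [e] at h
      exact h.trans (mul_le_mul_of_nonneg_left (hdiff _) hCγ)
    have a1 : |Real.log 2 * (p0 m - p0 (m+1)) - Real.log 2 * (pN m - pN (m+1))|
        ≤ Real.log 2 * (2 * δ₀) := by
      have e : Real.log 2 * (p0 m - p0 (m+1)) - Real.log 2 * (pN m - pN (m+1))
          = Real.log 2 * ((p0 m - pN m) - (p0 (m+1) - pN (m+1))) := by ring
      rw [e, abs_mul, abs_of_pos l2]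
      apply mul_le_mul_of_nonneg_left _ l2.le
      calc |(p0 m - pN m) - (p0 (m+1) - pN (m+1))| ≤ |p0 m - pN m| + |p0 (m+1) - pN (m+1)| :=
            abs_sub _ _
        _ ≤ 2 * δ₀ := by have := hdiff m; have := hdiff (m+1); linarith
    rw [KD.log_theta, KD.log_theta]
    set A1 := Real.log 2 * (p0 m - p0 (m+1)) - Real.log 2 * (pN m - pN (m+1)) with hA1
    set B2 := Fl KD.k ((m:ℝ) + 1 + p0 (m+1)) - Fl KD.k ((m:ℝ) + 1 + pN (m+1)) with hB2
    set B1 := Fl KD.k ((m:ℝ) + p0 m) - Fl KD.k ((m:ℝ) + pN m) with hB1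
    set G2 := Fl KD.γ ((m:ℝ) + 2 + p0 (m+2)) - Fl KD.γ ((m:ℝ) + 2 + pN (m+2)) with hG2
    set G1 := Fl KD.γ ((m:ℝ) + 1 + p0 (m+1)) - Fl KD.γ ((m:ℝ) + 1 + pN (m+1)) with hG1
    have key : Real.log 2 * (p0 m - p0 (m + 1))
          + (Fl KD.k ((m:ℝ) + 1 + p0 (m + 1)) - Fl KD.k ((m:ℝ) + p0 m))
          - (Fl KD.γ ((m:ℝ) + 2 + p0 (m + 2)) - Fl KD.γ ((m:ℝ) + 1 + p0 (m + 1)))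
        - (Real.log 2 * (pN m - pN (m + 1))
          + (Fl KD.k ((m:ℝ) + 1 + pN (m + 1)) - Fl KD.k ((m:ℝ) + pN m))
          - (Fl KD.γ ((m:ℝ) + 2 + pN (m + 2)) - Fl KD.γ ((m:ℝ) + 1 + pN (m + 1))))
        = A1 + B2 - B1 - G2 + G1 := by rw [hA1, hB2, hB1, hG2, hG1]; ring
    rw [key]
    have u1 := le_abs_self A1; have v1 := neg_abs_le A1
    have u2 := le_abs_self B2; have v2 := neg_abs_le B2
    have u3 := le_abs_self B1; have v3 := neg_abs_le B1
    have u4 := le_abs_self G2; have v4 := neg_abs_le G2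
    have u5 := le_abs_self G1; have v5 := neg_abs_le G1
    rw [abs_le]; constructor <;> nlinarith [l2.le]


lemma Sv_diff (p0 pN : ℤ → ℝ) (M ε : ℝ)
    (h0 : ∀ m : ℤ, |Real.log (KD.thetaSeq p0 m)| ≤ M)
    (hN : ∀ m : ℤ, |Real.log (KD.thetaSeq pN m)| ≤ M)
    (hd : ∀ m : ℤ, |Real.log (KD.thetaSeq p0 m) - Real.log (KD.thetaSeq pN m)| ≤ ε)
    (n : ℤ) : |(2:ℝ)^((n:ℝ)) * (KD.Sv p0 n - KD.Sv pN n)| ≤ ε := by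
  unfold Kernels.Sv
  exact tsum_weight_diff ((n:ℝ)) _ _ M ε (fun j => h0 _) (fun j => hN _) (fun j => hd _)

end Kernels

end Helpers

set_option maxHeartbeats 2000000 in
/-- re-representation of well-prepared initial data with respect to
the truncated shift sequence (Lemma 5.1). -/
theorem truncated_initial_representation (KD : Kernels) :
    ∃ δbar : ℝ, 0 < δbar ∧ δbar ≤ 1 ∧
    ∃ c₀ : ℝ, 0 < c₀ ∧
      ∀ δ₀ : ℝ, 0 < δ₀ → δ₀ < δbar →
      ∀ A0 : ℝ, 0 < A0 →
      ∀ y0 p0 : ℤ → ℝ, Ynorm 1 y0 ≤ ENNReal.ofReal δ₀ → (∀ n, |p0 n| ≤ δ₀) →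
        ∃ N₀ : ℕ, ∀ N : ℕ, N₀ ≤ N →
          ∃ (AN : ℝ) (yN : ℤ → ℝ), 0 < AN ∧ yN (N:ℤ) = 0 ∧
            (∀ n : ℤ, (N:ℤ) < n → yN n = y0 n) ∧
            (∀ n : ℤ, n ≤ (N:ℤ) →
              KD.mbar A0 p0 n * (1 + (2:ℝ) ^ (n:ℝ) * y0 n) =
                KD.mbar AN (fun j => if j ≤ (N:ℤ) then p0 j else 0) n *
                  (1 + (2:ℝ) ^ (n:ℝ) * yN n)) ∧
            |AN - A0| ≤ c₀ * (2:ℝ) ^ (-(N:ℝ)) * δ₀ ∧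
            Ynorm 1 (fun n => yN n - y0 n) ≤ ENNReal.ofReal (c₀ * δ₀) := by
  classical
  have l2pos : (0:ℝ) < Real.log 2 := Real.log_pos one_lt_two
  -- limits at 0 and ∞ in convenient form
  have hkZeroT : Tendsto KD.k (𝓝[>] (0:ℝ)) (𝓝 KD.k₀) := by
    have h1 : Tendsto (fun ξ : ℝ => ξ ^ KD.αb) (𝓝[>] (0:ℝ)) (𝓝 0) := by
      have hcont : ContinuousAt (fun ξ : ℝ => ξ ^ KD.αb) 0 :=
        Real.continuousAt_rpow_const 0 KD.αb (Or.inr (by linarith [KD.hαb]))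
      have h0 : (0:ℝ) ^ KD.αb = 0 := Real.zero_rpow (by linarith [KD.hαb])
      have h2 := hcont.tendsto
      rw [h0] at h2
      exact h2.mono_left nhdsWithin_le_nhds
    have h2 := KD.hkZero.trans_tendsto h1
    have h3 := h2.add_const KD.k₀
    simpa using h3
  have hγZeroT : Tendsto KD.γ (𝓝[>] (0:ℝ)) (𝓝 KD.γ₀) := by
    have h1 : Tendsto (fun ξ : ℝ => ξ ^ KD.βb) (𝓝[>] (0:ℝ)) (𝓝 0) := by
      have hcont : ContinuousAt (fun ξ : ℝ => ξ ^ KD.βb) 0 :=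
        Real.continuousAt_rpow_const 0 KD.βb (Or.inr (by linarith [KD.hβb]))
      have h0 : (0:ℝ) ^ KD.βb = 0 := Real.zero_rpow (by linarith [KD.hβb])
      have h2 := hcont.tendsto
      rw [h0] at h2
      exact h2.mono_left nhdsWithin_le_nhds
    have h2 := KD.hγZero.trans_tendsto h1
    have h3 := h2.add_const KD.γ₀
    simpa using h3
  have hγInfT : Tendsto (fun ξ : ℝ => KD.γ ξ / ξ ^ KD.β) atTop (𝓝 1) := by
    have hb : (0:ℝ) < KD.β - KD.βt := by linarith [KD.hβt]
    have h1 : (fun ξ : ℝ => KD.γ ξ / ξ ^ KD.β - 1) =O[atTop]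
        fun ξ : ℝ => ξ ^ (KD.βt - KD.β) := by
      have h2 := KD.hγInfty.mul (isBigO_refl (fun ξ : ℝ => ξ ^ (-KD.β)) atTop)
      refine h2.congr' ?_ ?_
      · filter_upwards [eventually_gt_atTop (0:ℝ)] with ξ hξ
        have hpb : ξ ^ KD.β ≠ 0 := ne_of_gt (Real.rpow_pos_of_pos hξ _)
        rw [Real.rpow_neg hξ.le, sub_mul, mul_inv_cancel₀ hpb, ← div_eq_mul_inv]
      · filter_upwards [eventually_gt_atTop (0:ℝ)] with ξ hξ
        rw [show KD.βt - KD.β = KD.βt + -KD.β by ring, Real.rpow_add hξ]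
    have h3 : Tendsto (fun ξ : ℝ => ξ ^ (KD.βt - KD.β)) atTop (𝓝 0) := by
      rw [show KD.βt - KD.β = -(KD.β - KD.βt) by ring]
      exact tendsto_rpow_neg_atTop hb
    have h4 := (h1.trans_tendsto h3).add_const 1
    simpa using h4
  obtain ⟨Mk, hMk0, hMk⟩ := exists_M_bound KD.k (KD.α + 1) KD.k₀ KD.hkpos
    KD.hkC2.continuousOn KD.hkInfty hkZeroT KD.hk₀ (by linarith [KD.hα.1])
  obtain ⟨Mγ, hMγ0, hMγ⟩ := exists_M_bound KD.γ KD.β KD.γ₀ KD.hγpos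
    KD.hγC2.continuousOn hγInfT hγZeroT KD.hγ₀ (by linarith [KD.hβ.1])
  obtain ⟨CLk, x₀k, hCLk, hx₀k, hLk⟩ := exists_Lip KD.k (KD.α + 1) KD.k₁ KD.hkC2 KD.hkpos
    KD.hkInfty (fun ξ hξ => by
      rw [show KD.α + 1 - 1 = KD.α by ring]; exact KD.hk'ge ξ hξ) KD.hk₁
  obtain ⟨CLγ, x₀γ, hCLγ, hx₀γ, hLγ⟩ := exists_Lip KD.γ KD.β KD.γ₁ KD.hγC2 KD.hγpos
    hγInfT (fun ξ hξ => KD.hγ'ge ξ hξ) KD.hγ₁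
  set x₀ : ℝ := max x₀k x₀γ with hx₀def
  have hLk' : ∀ x y : ℝ, x₀ ≤ x → x₀ ≤ y → |Fl KD.k x - Fl KD.k y| ≤ CLk * |x - y| :=
    fun x y hx hy => hLk x y ((le_max_left _ _).trans hx) ((le_max_left _ _).trans hy)
  have hLγ' : ∀ x y : ℝ, x₀ ≤ x → x₀ ≤ y → |Fl KD.γ x - Fl KD.γ y| ≤ CLγ * |x - y| :=
    fun x y hx hy => hLγ x y ((le_max_right _ _).trans hx) ((le_max_right _ _).trans hy)
  set M₀ : ℝ := 2 * Real.log 2 + Mk + Mγ with hM₀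
  set CD : ℝ := 2 * Real.log 2 + 2 * CLk + 2 * CLγ with hCD
  have hCDpos : 0 < CD := by rw [hCD]; linarith
  set c₁ : ℝ := CD + CLγ + 2 with hc₁
  have hc₁pos : 0 < c₁ := by rw [hc₁]; linarith
  set c₂ : ℝ := c₁ + CD + CLγ with hc₂
  have hc₂pos : 0 < c₂ := by rw [hc₂]; linarith
  set c₀ : ℝ := max c₁ (6 * c₂) with hc₀def
  refine ⟨min (1/2) (1/c₂), by positivity, le_trans (min_le_left _ _) (by norm_num),
    c₀, lt_of_lt_of_le hc₁pos (le_max_left _ _), ?_⟩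
  intro δ₀ hδ₀ hδ₀lt A0 hA0 y0 p0 hy0 hp0
  have hδhalf : δ₀ ≤ 1/2 := le_trans hδ₀lt.le (min_le_left _ _)
  have hδc₂ : c₂ * δ₀ ≤ 1 := by
    have h1 : δ₀ ≤ 1/c₂ := le_trans hδ₀lt.le (min_le_right _ _)
    rw [le_div_iff₀ hc₂pos] at h1
    linarith
  have hδ1 : δ₀ ≤ 1 := by linarith
  have hy0' : ∀ n : ℤ, (2:ℝ)^((n:ℝ)) * |y0 n| ≤ δ₀ := of_Ynorm_le hδ₀.le hy0
  obtain ⟨N₁, hN₁⟩ := exists_nat_gt (x₀ + 2)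
  obtain ⟨N₂, hN₂⟩ := exists_nat_gt (c₁ / A0)
  refine ⟨max N₁ N₂, ?_⟩
  intro N hN
  have hNN₁ : (N₁:ℝ) ≤ (N:ℝ) := Nat.cast_le.2 (le_trans (le_max_left _ _) hN)
  have hbig : x₀ + 2 ≤ (N:ℝ) := le_trans hN₁.le hNN₁
  have h2N : c₁ * (2:ℝ)^(-(N:ℝ)) < A0 := by
    have h1 : c₁ < A0 * N₂ := by rw [div_lt_iff₀ hA0] at hN₂; linarith
    have h2 : (N₂:ℝ) ≤ (2:ℝ)^((N:ℝ)) := by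
      calc (N₂:ℝ) ≤ (N:ℝ) := Nat.cast_le.2 (le_trans (le_max_right _ _) hN)
        _ ≤ ((2^N : ℕ):ℝ) := by exact_mod_cast (N.lt_two_pow_self).le
        _ = (2:ℝ)^((N:ℝ)) := by rw [Real.rpow_natCast]; push_cast; ring
    have h3 : c₁ < A0 * (2:ℝ)^((N:ℝ)) :=
      lt_of_lt_of_le h1 (mul_le_mul_of_nonneg_left h2 hA0.le)
    calc c₁ * (2:ℝ)^(-(N:ℝ)) < (A0 * (2:ℝ)^((N:ℝ))) * (2:ℝ)^(-(N:ℝ)) :=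
          mul_lt_mul_of_pos_right h3 (two_rpow_pos _)
      _ = A0 := by rw [mul_assoc, ← Real.rpow_add two_pos]; simp
  set pN : ℤ → ℝ := fun j => if j ≤ (N:ℤ) then p0 j else 0 with hpNdef
  have hagree : ∀ i : ℤ, i ≤ (N:ℤ) → p0 i = pN i := by
    intro i hi; rw [hpNdef]; simp [hi]
  have hpNs : ∀ i : ℤ, |pN i| ≤ δ₀ := by
    intro i
    rw [hpNdef]
    by_cases hi : i ≤ (N:ℤ)
    · simpa [hi] using hp0 i
    · simp [hi, hδ₀.le]
  have hdiffp : ∀ i : ℤ, |p0 i - pN i| ≤ δ₀ := by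
    intro i
    rw [hpNdef]
    by_cases hi : i ≤ (N:ℤ)
    · simp [hi, hδ₀.le]
    · simpa [hi] using hp0 i
  have hsmall0 : ∀ i : ℤ, |p0 i| ≤ 1 := fun i => le_trans (hp0 i) (by linarith)
  have hsmallN : ∀ i : ℤ, |pN i| ≤ 1 := fun i => le_trans (hpNs i) (by linarith)
  have hθ0 : ∀ m : ℤ, |Real.log (KD.thetaSeq p0 m)| ≤ M₀ :=
    KD.abs_log_theta_le Mk Mγ hMk hMγ p0 hsmall0
  have hθN : ∀ m : ℤ, |Real.log (KD.thetaSeq pN m)| ≤ M₀ :=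
    KD.abs_log_theta_le Mk Mγ hMk hMγ pN hsmallN
  have hθd : ∀ m : ℤ, |Real.log (KD.thetaSeq p0 m) - Real.log (KD.thetaSeq pN m)| ≤ CD * δ₀ :=
    KD.log_theta_sub CLk CLγ x₀ δ₀ N hLk' hLγ' hCLk.le hCLγ.le hδ₀.le p0 pN
      hagree hdiffp hsmall0 hsmallN hbig
  have hζd : ∀ n : ℤ, n ≤ (N:ℤ) →
      |Real.log (KD.zeta p0 n) - Real.log (KD.zeta pN n)| ≤ CLγ * δ₀ :=
    KD.log_zeta_sub CLγ x₀ δ₀ N hLγ' hCLγ.le hδ₀.le p0 pN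
      hagree hdiffp hsmall0 hsmallN hbig
  have hSd : ∀ n : ℤ, |(2:ℝ)^((n:ℝ)) * (KD.Sv p0 n - KD.Sv pN n)| ≤ CD * δ₀ :=
    KD.Sv_diff p0 pN M₀ (CD * δ₀) hθ0 hθN hθd
  set u : ℝ := (2:ℝ)^(((N:ℤ):ℝ)) * y0 (N:ℤ) with hu
  have huδ : |u| ≤ δ₀ := by
    rw [hu, abs_mul, abs_of_pos (two_rpow_pos _)]
    exact hy0' (N:ℤ)
  have hu1 : (0:ℝ) < 1 + u := by have := abs_le.1 huδ; linarith
  have hlogu : |Real.log (1 + u)| ≤ 2 * δ₀ := by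
    have h1 := abs_log_one_add_le (le_trans huδ hδhalf)
    linarith
  set W : ℝ := (2:ℝ)^(((N:ℤ):ℝ)) * (KD.Sv p0 (N:ℤ) - KD.Sv pN (N:ℤ))
      + Real.log (KD.zeta p0 (N:ℤ)) - Real.log (KD.zeta pN (N:ℤ)) - Real.log (1 + u) with hW
  have hWb : |W| ≤ c₁ * δ₀ := by
    have a1 := abs_le.1 (hSd (N:ℤ))
    have a2 := abs_le.1 (hζd (N:ℤ) le_rfl)
    have a3 := abs_le.1 hlogu
    rw [hW, hc₁, abs_le]
    constructor <;> [linarith; linarith]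
  set AN : ℝ := A0 + (2:ℝ)^(-((N:ℤ):ℝ)) * W with hAN
  have hcancelN : (2:ℝ)^(-((N:ℤ):ℝ)) * (2:ℝ)^(((N:ℤ):ℝ)) = 1 := by
    rw [← Real.rpow_add two_pos]; simp
  have hANsub : AN - A0 = (2:ℝ)^(-((N:ℤ):ℝ)) * W := by rw [hAN]; ring
  have hcast : ((N:ℤ):ℝ) = (N:ℝ) := by push_cast; ring
  have hANd : |AN - A0| ≤ c₀ * (2:ℝ)^(-(N:ℝ)) * δ₀ := by
    rw [hANsub, abs_mul, abs_of_pos (two_rpow_pos _), hcast]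
    have hc₀c₁ : c₁ ≤ c₀ := le_max_left _ _
    have hr := (two_rpow_pos (-(N:ℝ))).le
    calc (2:ℝ)^(-(N:ℝ)) * |W| ≤ (2:ℝ)^(-(N:ℝ)) * (c₁ * δ₀) :=
          mul_le_mul_of_nonneg_left hWb hr
      _ ≤ c₀ * (2:ℝ)^(-(N:ℝ)) * δ₀ := by
          nlinarith [mul_le_mul_of_nonneg_right hc₀c₁ (mul_nonneg hr hδ₀.le)]
  have hANpos : 0 < AN := by
    have hW1 : |W| ≤ c₁ := le_trans hWb (by nlinarith)
    have h2 := (abs_le.1 hW1).1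
    have hr := two_rpow_pos (-((N:ℤ):ℝ))
    rw [hAN]
    have h3 : (2:ℝ)^(-((N:ℤ):ℝ)) * W ≥ -(c₁ * (2:ℝ)^(-(N:ℝ))) := by
      rw [← hcast]; nlinarith
    linarith
  set E : ℤ → ℝ := fun n => (AN - A0) * (2:ℝ)^((n:ℝ))
      + (2:ℝ)^((n:ℝ)) * (KD.Sv pN n - KD.Sv p0 n)
      + Real.log (KD.zeta pN n) - Real.log (KD.zeta p0 n) with hE
  have hEdef : ∀ n : ℤ, E n = (AN - A0) * (2:ℝ)^((n:ℝ))
      + (2:ℝ)^((n:ℝ)) * (KD.Sv pN n - KD.Sv p0 n)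
      + Real.log (KD.zeta pN n) - Real.log (KD.zeta p0 n) := fun n => by rw [hE]
  have hRatio : ∀ n : ℤ, KD.mbar A0 p0 n = Real.exp (E n) * KD.mbar AN pN n := by
    intro n
    have h := KD.mbar_ratio A0 AN p0 pN n
    rw [div_eq_iff (ne_of_gt (KD.mbar_pos AN pN n))] at h
    rw [hEdef n]
    exact h
  have hEb : ∀ n : ℤ, n ≤ (N:ℤ) → |E n| ≤ c₂ * δ₀ := by
    intro n hn
    have h1 : |(AN - A0) * (2:ℝ)^((n:ℝ))| ≤ c₁ * δ₀ := by
      rw [hANsub, abs_mul, abs_mul, abs_of_pos (two_rpow_pos _), abs_of_pos (two_rpow_pos _)]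
      have hle : (2:ℝ)^(-((N:ℤ):ℝ)) * (2:ℝ)^((n:ℝ)) ≤ 1 := by
        rw [← Real.rpow_add two_pos]
        apply Real.rpow_le_one_of_one_le_of_nonpos one_le_two
        have h2 : (n:ℝ) ≤ ((N:ℤ):ℝ) := Int.cast_le.2 hn
        linarith
      nlinarith [abs_nonneg W, hWb, (two_rpow_pos (-((N:ℤ):ℝ))).le,
        (two_rpow_pos ((n:ℝ))).le]
    have h2 : |(2:ℝ)^((n:ℝ)) * (KD.Sv pN n - KD.Sv p0 n)| ≤ CD * δ₀ := by
      rw [show (KD.Sv pN n - KD.Sv p0 n) = -(KD.Sv p0 n - KD.Sv pN n) by ring,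
        mul_neg, abs_neg]
      exact hSd n
    have h3 : |Real.log (KD.zeta pN n) - Real.log (KD.zeta p0 n)| ≤ CLγ * δ₀ := by
      rw [abs_sub_comm]; exact hζd n hn
    have a1 := abs_le.1 h1
    have a2 := abs_le.1 h2
    have a3 := abs_le.1 h3
    rw [hEdef n, hc₂, abs_le]
    constructor <;> [linarith; linarith]
  have hEN : E (N:ℤ) = -Real.log (1 + u) := by
    rw [hEdef (N:ℤ), hANsub, hW]
    linear_combination ((2:ℝ)^(((N:ℤ):ℝ)) * (KD.Sv p0 (N:ℤ) - KD.Sv pN (N:ℤ))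
      + Real.log (KD.zeta p0 (N:ℤ)) - Real.log (KD.zeta pN (N:ℤ))
      - Real.log (1 + u)) * hcancelN
  set yN : ℤ → ℝ := fun n => if n ≤ (N:ℤ) then
      (2:ℝ)^(-(n:ℝ)) * (Real.exp (E n) * (1 + (2:ℝ)^((n:ℝ)) * y0 n) - 1) else y0 n with hyN
  refine ⟨AN, yN, hANpos, ?_, ?_, ?_, hANd, ?_⟩
  · -- yN N = 0
    have h1 : yN (N:ℤ) = (2:ℝ)^(-(((N:ℤ)):ℝ)) *
        (Real.exp (E (N:ℤ)) * (1 + (2:ℝ)^((((N:ℤ)):ℝ)) * y0 (N:ℤ)) - 1) := by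
      rw [hyN]; simp
    rw [h1, hEN, Real.exp_neg, Real.exp_log hu1, ← hu,
      inv_mul_cancel₀ (ne_of_gt hu1)]
    simp
  · -- n > N
    intro n hn
    rw [hyN]
    simp [not_le.2 hn]
  · -- representation identity
    intro n hn
    have hyNn : yN n = (2:ℝ)^(-(n:ℝ)) *
        (Real.exp (E n) * (1 + (2:ℝ)^((n:ℝ)) * y0 n) - 1) := by
      rw [hyN]; simp [hn]
    have hcn : (2:ℝ)^((n:ℝ)) * (2:ℝ)^(-(n:ℝ)) = 1 := by
      rw [← Real.rpow_add two_pos]; simp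
    rw [hyNn, hRatio n]
    linear_combination -(KD.mbar AN pN n *
      (Real.exp (E n) * (1 + (2:ℝ)^((n:ℝ)) * y0 n) - 1)) * hcn
  · -- Ynorm estimate
    have hd : ∀ n : ℤ, (2:ℝ)^((n:ℝ)) * |yN n - y0 n| ≤ 3 * (c₂ * δ₀) := by
      intro n
      by_cases hn : n ≤ (N:ℤ)
      · have hyNn : yN n = (2:ℝ)^(-(n:ℝ)) *
            (Real.exp (E n) * (1 + (2:ℝ)^((n:ℝ)) * y0 n) - 1) := by
          rw [hyN]; simp [hn]
        have hcn : (2:ℝ)^((n:ℝ)) * (2:ℝ)^(-(n:ℝ)) = 1 := by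
          rw [← Real.rpow_add two_pos]; simp
        have hv := hy0' n
        have hE1 : |E n| ≤ 1 := le_trans (hEb n hn) hδc₂
        have hexp : |Real.exp (E n) - 1| ≤ 2 * (c₂ * δ₀) := by
          have h1 := Real.abs_exp_sub_one_le hE1
          have h2 := hEb n hn
          linarith
        have heq : (2:ℝ)^((n:ℝ)) * (yN n - y0 n)
            = (Real.exp (E n) - 1) * (1 + (2:ℝ)^((n:ℝ)) * y0 n) := by
          rw [hyNn]
          linear_combination (Real.exp (E n) * (1 + (2:ℝ)^((n:ℝ)) * y0 n) - 1) * hcn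
        have habs : (2:ℝ)^((n:ℝ)) * |yN n - y0 n| = |(2:ℝ)^((n:ℝ)) * (yN n - y0 n)| := by
          rw [abs_mul, abs_of_pos (two_rpow_pos _)]
        rw [habs, heq, abs_mul]
        have hvb : |1 + (2:ℝ)^((n:ℝ)) * y0 n| ≤ 3/2 := by
          have hh : |(2:ℝ)^((n:ℝ)) * y0 n| ≤ δ₀ := by
            rw [abs_mul, abs_of_pos (two_rpow_pos _)]; exact hv
          calc |1 + (2:ℝ)^((n:ℝ)) * y0 n| ≤ |(1:ℝ)| + |(2:ℝ)^((n:ℝ)) * y0 n| := abs_add_le _ _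
            _ ≤ 1 + δ₀ := by rw [abs_one]; linarith
            _ ≤ 3/2 := by linarith
        calc |Real.exp (E n) - 1| * |1 + (2:ℝ)^((n:ℝ)) * y0 n|
            ≤ (2 * (c₂ * δ₀)) * (3/2) :=
              mul_le_mul hexp hvb (abs_nonneg _) (by positivity)
          _ = 3 * (c₂ * δ₀) := by ring
      · have h1 : yN n = y0 n := by rw [hyN]; simp [hn]
        rw [h1, sub_self, abs_zero, mul_zero]
        positivity
    have h2 := Ynorm_le_of (y := fun n => yN n - y0 n) (K := 3*(c₂*δ₀)) (by positivity) hd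
    refine le_trans h2 (ENNReal.ofReal_le_ofReal ?_)
    have h3 : 6*c₂ ≤ c₀ := le_max_right _ _
    nlinarith [hδ₀.le]
end
end
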